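/- arXiv:1702.05369 — 7 statements merged into one kernel-verified Lean document; each statement's English description precedes it below -/
import Mathlib

section
/- There exist α ∈ (0, 1/2), K₀ > 0 and a constant C > 0 such that for all K ≥ K₀ and all n ∈ ℤ₊^d with ‖n‖ ≤ R·K, the generator applied to the Lyapunov function satisfies 𝓛_K φ(n) ≤ ( −α·β·(‖n‖/K)·(‖n − n*‖²/K) + C ) · φ(n). -/
open scoped BigOperators RealInnerProductSpace

noncomputable section

namespace MultitypeBD

variable {d : ℕ}

/-- The real vector associated to a lattice point. -/
def toVec (n : Fin d → ℤ) : EuclideanSpace ℝ (Fin d) := WithLp.toLp 2 (fun i => (n i : ℝ))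

/-- The lattice point `n* = ⌊K·x*⌋` (componentwise floor). -/
def nstar (K : ℝ) (xstar : EuclideanSpace ℝ (Fin d)) : Fin d → ℤ := fun i => ⌊K * xstar i⌋

/-- The Lyapunov function `φ(n) = exp((α/K)·‖n − n*‖²)`. -/
def lyap (α K : ℝ) (xstar : EuclideanSpace ℝ (Fin d)) (n : Fin d → ℤ) : ℝ :=
  Real.exp ((α / K) * ‖toVec n - toVec (nstar K xstar)‖ ^ 2)

/-- The generator
`𝓛_K f(n) = K·Σ_j [B_j(n/K)(f(n+e_j) − f(n)) + D_j(n/K)(f(n−e_j) − f(n))]`. -/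
def gen (K : ℝ) (B D : EuclideanSpace ℝ (Fin d) → EuclideanSpace ℝ (Fin d))
    (f : (Fin d → ℤ) → ℝ) (n : Fin d → ℤ) : ℝ :=
  K * ∑ j : Fin d,
    (B (WithLp.toLp 2 (fun i => (n i : ℝ) / K)) j * (f (Function.update n j (n j + 1)) - f n)
      + D (WithLp.toLp 2 (fun i => (n i : ℝ) / K)) j * (f (Function.update n j (n j - 1)) - f n))

end MultitypeBD

open MultitypeBD

section Auxiliary

open Filter Topology

variable {d : ℕ}

lemma exp_taylor2 {t : ℝ} (ht : |t| ≤ 1) : Real.exp t - 1 ≤ t + t ^ 2 := by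
  have h := Real.exp_bound ht (n := 2) (by norm_num)
  have h2 : ∑ m ∈ Finset.range 2, t ^ m / m.factorial = 1 + t := by
    simp [Finset.sum_range_succ]
  rw [h2] at h
  norm_num [Nat.factorial] at h
  have := (abs_sub_le_iff.1 h).1
  have h3 : |t| ^ 2 = t ^ 2 := sq_abs t
  nlinarith [this]

lemma normsq_eq (u : EuclideanSpace ℝ (Fin d)) : ‖u‖ ^ 2 = ∑ i, u i ^ 2 := by
  rw [EuclideanSpace.norm_eq, Real.sq_sqrt (by positivity)]
  simp [sq_abs]

lemma coord_le_norm (u : EuclideanSpace ℝ (Fin d)) (j : Fin d) : |u j| ≤ ‖u‖ := by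
  have h1 : u j ^ 2 ≤ ‖u‖ ^ 2 := by
    rw [normsq_eq]
    exact Finset.single_le_sum (fun i _ => sq_nonneg (u i)) (Finset.mem_univ j)
  nlinarith [abs_nonneg (u j), norm_nonneg u, sq_abs (u j)]

lemma inner_eq (u v : EuclideanSpace ℝ (Fin d)) : ⟪u, v⟫ = ∑ i, u i * v i := by
  simp [PiLp.inner_apply, RCLike.inner_apply]
  exact Finset.sum_congr rfl fun i _ => mul_comm _ _

lemma orthant_closed : IsClosed {x : EuclideanSpace ℝ (Fin d) | ∀ i, 0 ≤ x i} := by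
  have : {x : EuclideanSpace ℝ (Fin d) | ∀ i, 0 ≤ x i} = ⋂ i, {x | 0 ≤ x i} := by
    ext x; simp
  rw [this]
  exact isClosed_iInter fun i =>
    isClosed_le continuous_const (EuclideanSpace.proj i).continuous

lemma exists_linear_bound {f : EuclideanSpace ℝ (Fin d) → EuclideanSpace ℝ (Fin d)}
    (hf : LocallyLipschitzOn {x : EuclideanSpace ℝ (Fin d) | ∀ i, 0 ≤ x i} f)
    (hf0 : f 0 = 0) (R : ℝ) :
    ∃ L : ℝ, 1 ≤ L ∧ ∀ x : EuclideanSpace ℝ (Fin d), (∀ i, 0 ≤ x i) → ‖x‖ ≤ R →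
      ‖f x‖ ≤ L * ‖x‖ := by
  have h0 : (0 : EuclideanSpace ℝ (Fin d)) ∈ {x : EuclideanSpace ℝ (Fin d) | ∀ i, 0 ≤ x i} :=
    fun i => le_refl 0
  obtain ⟨K₁, t, ht, hlip⟩ := hf h0
  obtain ⟨ε, hε, hsub⟩ := Metric.mem_nhdsWithin_iff.1 ht
  have hScomp : IsCompact ({x : EuclideanSpace ℝ (Fin d) | ∀ i, 0 ≤ x i} ∩
      Metric.closedBall 0 R) :=
    (isCompact_closedBall (0 : EuclideanSpace ℝ (Fin d)) R).inter_left orthant_closed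
  obtain ⟨M, hM⟩ := hScomp.exists_bound_of_continuousOn
    (hf.continuousOn.mono Set.inter_subset_left)
  refine ⟨max 1 (max (K₁ : ℝ) (M / ε)), le_max_left _ _, fun x hx hxR => ?_⟩
  rcases lt_or_ge ‖x‖ ε with hlt | hge
  · have hxt : x ∈ t := hsub ⟨by simpa [Metric.mem_ball] using hlt, hx⟩
    have h0t : (0 : EuclideanSpace ℝ (Fin d)) ∈ t := hsub ⟨by simpa [Metric.mem_ball], h0⟩
    have := hlip.dist_le_mul x hxt 0 h0t
    rw [dist_eq_norm, dist_eq_norm, hf0, sub_zero, sub_zero] at this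
    calc ‖f x‖ ≤ K₁ * ‖x‖ := this
      _ ≤ max 1 (max (K₁ : ℝ) (M / ε)) * ‖x‖ := by
          apply mul_le_mul_of_nonneg_right _ (norm_nonneg x)
          exact le_max_of_le_right (le_max_left _ _)
  · have hxS : x ∈ {x : EuclideanSpace ℝ (Fin d) | ∀ i, 0 ≤ x i} ∩ Metric.closedBall 0 R := by
      exact ⟨hx, by simpa [Metric.mem_closedBall, dist_eq_norm] using hxR⟩
    have hMx := hM x hxS
    calc ‖f x‖ ≤ M := hMx
      _ = (M / ε) * ε := by field_simp
      _ ≤ (M / ε) * ‖x‖ := by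
          apply mul_le_mul_of_nonneg_left hge
          have hM0 : 0 ≤ M := le_trans (norm_nonneg _) hMx
          positivity
      _ ≤ max 1 (max (K₁ : ℝ) (M / ε)) * ‖x‖ := by
          apply mul_le_mul_of_nonneg_right _ (norm_nonneg x)
          exact le_max_of_le_right (le_max_right _ _)

lemma drift_ext {B D : EuclideanSpace ℝ (Fin d) → EuclideanSpace ℝ (Fin d)}
    (hBc : ContinuousOn B {x : EuclideanSpace ℝ (Fin d) | ∀ i, 0 ≤ x i})
    (hDc : ContinuousOn D {x : EuclideanSpace ℝ (Fin d) | ∀ i, 0 ≤ x i})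
    {β R : ℝ} (hR : 0 < R) (xstar : EuclideanSpace ℝ (Fin d))
    (hcond : ∀ x : EuclideanSpace ℝ (Fin d), (∀ i, 0 ≤ x i) → ‖x‖ < R →
      ⟪B x - D x, x - xstar⟫ ≤ -β * ‖x‖ * ‖x - xstar‖ ^ 2)
    (x : EuclideanSpace ℝ (Fin d)) (hx : ∀ i, 0 ≤ x i) (hxR : ‖x‖ ≤ R) :
    ⟪B x - D x, x - xstar⟫ ≤ -β * ‖x‖ * ‖x - xstar‖ ^ 2 := by
  rcases lt_or_eq_of_le hxR with hlt | heq
  · exact hcond x hx hlt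
  · set S := {x : EuclideanSpace ℝ (Fin d) | ∀ i, 0 ≤ x i}
    have hxS : x ∈ S := hx
    set ψ : ℝ → EuclideanSpace ℝ (Fin d) := fun t => t • x with hψdef
    have hψc : Continuous ψ := continuous_id.smul continuous_const
    have hψ1 : ψ 1 = x := one_smul ℝ x
    set g : ℝ → ℝ := fun t =>
      ⟪B (ψ t) - D (ψ t), ψ t - xstar⟫ + β * ‖ψ t‖ * ‖ψ t - xstar‖ ^ 2 with hgdef
    have hmem : ∀ t ∈ Set.Ico (0:ℝ) 1, g t ≤ 0 := by
      intro t ht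
      have ht0 : 0 ≤ t := ht.1
      have ht1 : t < 1 := ht.2
      have hcoord : ∀ i, 0 ≤ (ψ t) i := by
        intro i
        have : (ψ t) i = t * x i := rfl
        rw [this]
        exact mul_nonneg ht0 (hx i)
      have hnrm : ‖ψ t‖ = t * R := by
        rw [hψdef]
        simp only [norm_smul, Real.norm_eq_abs, abs_of_nonneg ht0, ← heq]
      have hlt' : ‖ψ t‖ < R := by
        rw [hnrm]; nlinarith
      have := hcond (ψ t) hcoord hlt'
      simp only [hgdef]
      linarith
    have hNB : (𝓝[Set.Ico (0:ℝ) 1] 1).NeBot := by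
      apply mem_closure_iff_nhdsWithin_neBot.mp
      rw [closure_Ico (by norm_num : (0:ℝ) ≠ 1)]
      exact ⟨by norm_num, le_refl 1⟩
    have hψT' : Tendsto ψ (𝓝[Set.Ico (0:ℝ) 1] 1) (𝓝 x) := by
      have := (hψc.tendsto 1).mono_left (nhdsWithin_le_nhds (s := Set.Ico (0:ℝ) 1))
      rwa [hψ1] at this
    have hψT : Tendsto ψ (𝓝[Set.Ico (0:ℝ) 1] 1) (𝓝[S] x) := by
      rw [tendsto_nhdsWithin_iff]
      refine ⟨hψT', ?_⟩
      filter_upwards [self_mem_nhdsWithin] with t ht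
      intro i
      have : (ψ t) i = t * x i := rfl
      rw [this]
      exact mul_nonneg ht.1 (hx i)
    have hBT : Tendsto (fun t => B (ψ t)) (𝓝[Set.Ico (0:ℝ) 1] 1) (𝓝 (B x)) :=
      Filter.Tendsto.comp (hBc x hxS) hψT
    have hDT : Tendsto (fun t => D (ψ t)) (𝓝[Set.Ico (0:ℝ) 1] 1) (𝓝 (D x)) :=
      Filter.Tendsto.comp (hDc x hxS) hψT
    have hgT : Tendsto g (𝓝[Set.Ico (0:ℝ) 1] 1)
        (𝓝 (⟪B x - D x, x - xstar⟫ + β * ‖x‖ * ‖x - xstar‖ ^ 2)) := by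
      apply Filter.Tendsto.add
      · exact (hBT.sub hDT).inner (hψT'.sub tendsto_const_nhds)
      · exact ((tendsto_const_nhds.mul hψT'.norm).mul
          ((hψT'.sub tendsto_const_nhds).norm.pow 2))
    have hle : ⟪B x - D x, x - xstar⟫ + β * ‖x‖ * ‖x - xstar‖ ^ 2 ≤ 0 :=
      le_of_tendsto hgT (eventually_nhdsWithin_of_forall hmem)
    linarith

lemma toVec_update (n : Fin d → ℤ) (j : Fin d) (c : ℤ) :
    toVec (Function.update n j (n j + c))
      = toVec n + (c : ℝ) • EuclideanSpace.single j (1 : ℝ) := by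
  ext i
  by_cases hij : i = j
  · subst hij
    simp [toVec, Function.update, EuclideanSpace.single_apply, PiLp.add_apply, PiLp.smul_apply]
  · simp [toVec, Function.update, hij, EuclideanSpace.single_apply, PiLp.add_apply,
      PiLp.smul_apply]

lemma normsq_update (n : Fin d → ℤ) (w : EuclideanSpace ℝ (Fin d)) (j : Fin d) (c : ℤ) :
    ‖toVec (Function.update n j (n j + c)) - w‖ ^ 2
      = ‖toVec n - w‖ ^ 2 + (2 * (c : ℝ) * ((toVec n - w) j) + (c : ℝ) ^ 2) := by
  rw [toVec_update, add_sub_right_comm, norm_add_sq_real]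
  rw [real_inner_smul_right, EuclideanSpace.inner_single_right, norm_smul,
    EuclideanSpace.norm_single]
  simp [RCLike.conj_to_real]
  ring

lemma lyap_update (α K : ℝ) (xstar : EuclideanSpace ℝ (Fin d)) (n : Fin d → ℤ) (j : Fin d)
    (c : ℤ) :
    lyap α K xstar (Function.update n j (n j + c))
      = lyap α K xstar n
        * Real.exp ((α / K) * (2 * (c : ℝ) * ((toVec n - toVec (nstar K xstar)) j)
            + (c : ℝ) ^ 2)) := by
  rw [lyap, lyap, normsq_update, mul_add, Real.exp_add]

end Auxiliary

set_option maxHeartbeats 2000000 in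
/-- Theorem on the Lyapunov function: there exist `α ∈ (0,1/2)`, `K₀ > 0`
and `C > 0` such that for all `K ≥ K₀` and all `n ∈ ℤ₊^d` with `‖n‖ ≤ R·K`,
`𝓛_K φ(n) ≤ (−α·β·(‖n‖/K)·(‖n − n*‖²/K) + C)·φ(n)`. -/
theorem lyapunov_generator_bound (d : ℕ) (hd : 1 ≤ d)
    (B D : EuclideanSpace ℝ (Fin d) → EuclideanSpace ℝ (Fin d))
    (hBnonneg : ∀ x : EuclideanSpace ℝ (Fin d), (∀ i, 0 ≤ x i) → ∀ j, 0 ≤ B x j)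
    (hDnonneg : ∀ x : EuclideanSpace ℝ (Fin d), (∀ i, 0 ≤ x i) → ∀ j, 0 ≤ D x j)
    (hBlip : LocallyLipschitzOn {x : EuclideanSpace ℝ (Fin d) | ∀ i, 0 ≤ x i} B)
    (hDlip : LocallyLipschitzOn {x : EuclideanSpace ℝ (Fin d) | ∀ i, 0 ≤ x i} D)
    (hB0 : B 0 = 0) (hD0 : D 0 = 0)
    (xstar : EuclideanSpace ℝ (Fin d)) (hxstar : ∀ i, 0 < xstar i)
    (hfix : B xstar = D xstar)
    (β R : ℝ) (hβ : 0 < β) (hR : ‖xstar‖ < R)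
    (hlyapcond : ∀ x : EuclideanSpace ℝ (Fin d), (∀ i, 0 ≤ x i) → ‖x‖ < R →
      ⟪B x - D x, x - xstar⟫ ≤ -β * ‖x‖ * ‖x - xstar‖ ^ 2) :
    ∃ α K₀ C : ℝ, 0 < α ∧ α < 1 / 2 ∧ 0 < K₀ ∧ 0 < C ∧
      ∀ K : ℝ, K₀ ≤ K → ∀ n : Fin d → ℤ, (∀ i, 0 ≤ n i) →
        ‖toVec n‖ ≤ R * K →
        gen K B D (lyap α K xstar) n ≤
          (-(α * β) * (‖toVec n‖ / K) * (‖toVec n - toVec (nstar K xstar)‖ ^ 2 / K) + C)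
            * lyap α K xstar n := by
  have hR0 : 0 < R := lt_of_le_of_lt (norm_nonneg xstar) hR
  obtain ⟨LB, hLB1, hLB⟩ := exists_linear_bound hBlip hB0 R
  obtain ⟨LD, hLD1, hLD⟩ := exists_linear_bound hDlip hD0 R
  set L : ℝ := max LB LD with hLdef
  have hL1 : 1 ≤ L := le_trans hLB1 (le_max_left _ _)
  have hL0 : 0 < L := lt_of_lt_of_le one_pos hL1
  have hLB' : ∀ x : EuclideanSpace ℝ (Fin d), (∀ i, 0 ≤ x i) → ‖x‖ ≤ R →
      ‖B x‖ ≤ L * ‖x‖ := fun x hx hxR =>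
    le_trans (hLB x hx hxR) (mul_le_mul_of_nonneg_right (le_max_left _ _) (norm_nonneg x))
  have hLD' : ∀ x : EuclideanSpace ℝ (Fin d), (∀ i, 0 ≤ x i) → ‖x‖ ≤ R →
      ‖D x‖ ≤ L * ‖x‖ := fun x hx hxR =>
    le_trans (hLD x hx hxR) (mul_le_mul_of_nonneg_right (le_max_right _ _) (norm_nonneg x))
  set s : ℝ := Real.sqrt d with hsdef
  have hs0 : 0 ≤ s := Real.sqrt_nonneg d
  have hd0 : (0 : ℝ) ≤ d := Nat.cast_nonneg d
  set α : ℝ := min (1/4) (min (1/(4*R+3)) (β/(16*L))) with hαdef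
  have h4R3 : 0 < 4*R+3 := by linarith only [hR0]
  have hα0 : 0 < α := by
    apply lt_min (by norm_num)
    exact lt_min (by positivity) (by positivity)
  have hα14 : α ≤ 1/4 := min_le_left _ _
  have hα1 : α ≤ 1 := by linarith only [hα14]
  have hαR : α ≤ 1/(4*R+3) := le_trans (min_le_right _ _) (min_le_left _ _)
  have hαβ : α * (16*L) ≤ β := by
    have h : α ≤ β/(16*L) :=
      le_trans (min_le_right (1/4) (min (1/(4*R+3)) (β/(16*L))))
        (min_le_right (1/(4*R+3)) (β/(16*L)))
    rwa [le_div_iff₀ (by positivity : (0:ℝ) < 16*L)] at h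
  set C : ℝ := 2*(β*R*(4*R*s + (d:ℝ)) + 2*L*R*s) + 2*(d:ℝ)*L*R + 4*L*(d:ℝ)*R + 1 with hCdef
  have hC0 : 0 < C := by
    have h1 : 0 ≤ β*R*(4*R*s + (d:ℝ)) := by positivity
    have h2 : 0 ≤ 2*L*R*s := by positivity
    have h3 : 0 ≤ 2*(d:ℝ)*L*R := by positivity
    have h4 : 0 ≤ 4*L*(d:ℝ)*R := by positivity
    rw [hCdef]; linarith only [h1, h2, h3, h4]
  refine ⟨α, s + 1, C, hα0, by linarith only [hα14], by linarith only [hs0], hC0, ?_⟩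
  intro K hK n hn hnR
  have hK1 : 1 ≤ K := by linarith only [hK, hs0]
  have hK0 : 0 < K := by linarith only [hK, hs0]
  have hKs : s ≤ K := by linarith only [hK]
  set x : EuclideanSpace ℝ (Fin d) := WithLp.toLp 2 (fun i => (n i : ℝ) / K) with hxdef
  set m : EuclideanSpace ℝ (Fin d) := toVec n - toVec (nstar K xstar) with hmdef
  have hxorth : ∀ i, 0 ≤ x i := fun i =>
    show (0:ℝ) ≤ (n i : ℝ) / K from div_nonneg (by exact_mod_cast hn i) hK0.le
  have hKx : K • x = toVec n := by
    ext i
    show K * ((n i : ℝ) / K) = (n i : ℝ)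
    field_simp
  have hxnorm : ‖toVec n‖ = K * ‖x‖ := by
    rw [← hKx, norm_smul, Real.norm_eq_abs, abs_of_pos hK0]
  have hxR : ‖x‖ ≤ R := by
    rw [hxnorm] at hnR
    have h : K * ‖x‖ ≤ K * R := by linarith only [hnR]
    exact le_of_mul_le_mul_left h hK0
  have hx0 : 0 ≤ ‖x‖ := norm_nonneg x
  -- the rounding error vector
  set ε : EuclideanSpace ℝ (Fin d) := K • xstar - toVec (nstar K xstar) with hεdef
  have hεcoord : ∀ i, ε i = K * xstar i - (⌊K * xstar i⌋ : ℝ) := by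
    intro i; rfl
  have hεs : ‖ε‖ ≤ s := by
    have hε2 : ‖ε‖^2 ≤ (d:ℝ) := by
      rw [normsq_eq]
      calc ∑ i, ε i ^ 2 ≤ ∑ _i : Fin d, (1:ℝ) := by
            apply Finset.sum_le_sum
            intro i _
            have h1 : (⌊K * xstar i⌋ : ℝ) ≤ K * xstar i := Int.floor_le _
            have h2 : K * xstar i < (⌊K * xstar i⌋ : ℝ) + 1 := Int.lt_floor_add_one _
            rw [hεcoord i]
            nlinarith only [h1, h2]
        _ = (d:ℝ) := by simp
    have := Real.sqrt_le_sqrt hε2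
    rwa [Real.sqrt_sq (norm_nonneg ε)] at this
  have hmdecomp : m = K • (x - xstar) + ε := by
    rw [hmdef, ← hKx, hεdef, smul_sub]
    abel
  have haR : ‖x - xstar‖ ≤ 2*R := by
    have h := norm_sub_le x xstar
    linarith only [h, hR, hxR]
  have hmnorm : ‖m‖ ≤ K * ‖x - xstar‖ + s := by
    rw [hmdecomp]
    calc ‖K • (x - xstar) + ε‖ ≤ ‖K • (x - xstar)‖ + ‖ε‖ := norm_add_le _ _
      _ = K * ‖x - xstar‖ + ‖ε‖ := by
          rw [norm_smul, Real.norm_eq_abs, abs_of_pos hK0]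
      _ ≤ K * ‖x - xstar‖ + s := by linarith only [hεs]
  have hmK : ‖m‖ ≤ (4*R+2)*K/2 := by
    have h1 : K * ‖x - xstar‖ ≤ K * (2*R) := mul_le_mul_of_nonneg_left haR hK0.le
    linarith only [hmnorm, h1, hKs]
  -- bounds on coordinates of B x, D x
  have hBnorm : ‖B x‖ ≤ L * ‖x‖ := hLB' x hxorth hxR
  have hDnorm : ‖D x‖ ≤ L * ‖x‖ := hLD' x hxorth hxR
  have hBj : ∀ j, B x j ≤ L * ‖x‖ := fun j =>
    le_trans (le_abs_self _) (le_trans (coord_le_norm (B x) j) hBnorm)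
  have hDj : ∀ j, D x j ≤ L * ‖x‖ := fun j =>
    le_trans (le_abs_self _) (le_trans (coord_le_norm (D x) j) hDnorm)
  have hBj0 : ∀ j, 0 ≤ B x j := hBnonneg x hxorth
  have hDj0 : ∀ j, 0 ≤ D x j := hDnonneg x hxorth
  have hLxR : L * ‖x‖ ≤ L * R := mul_le_mul_of_nonneg_left hxR hL0.le
  -- bounds on the exponents
  have htb : ∀ j : Fin d, ∀ c : ℝ, |c| ≤ 2*‖m‖+1 → |(α/K) * c| ≤ 1 := by
    intro j c hc
    have h1 : |c| ≤ (4*R+3)*K := by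
      have h : (4*R+2)*K + 1 ≤ (4*R+3)*K := by linarith only [hK1]
      linarith only [hc, hmK, h]
    rw [abs_mul, abs_of_nonneg (by positivity : (0:ℝ) ≤ α/K)]
    have h2 : (α/K) * |c| ≤ (α/K) * ((4*R+3)*K) := by
      apply mul_le_mul_of_nonneg_left h1 (by positivity)
    have h3 : (α/K) * ((4*R+3)*K) = α * (4*R+3) := by field_simp
    rw [h3] at h2
    have h4 : α * (4*R+3) ≤ 1 := by
      rw [← le_div_iff₀ h4R3]
      exact hαR
    linarith only [h2, h4]
  have hmj : ∀ j, |m j| ≤ ‖m‖ := fun j => coord_le_norm m j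
  have htp : ∀ j : Fin d, |(α/K) * (2*(m j)+1)| ≤ 1 := by
    intro j
    apply htb j
    calc |2*(m j)+1| ≤ |2*(m j)| + 1 := by
          have := abs_add_le (2*(m j)) 1
          simpa using this
      _ ≤ 2*‖m‖+1 := by
          rw [abs_mul]
          have h := hmj j
          norm_num
          linarith only [h]
  have htm : ∀ j : Fin d, |(α/K) * (-2*(m j)+1)| ≤ 1 := by
    intro j
    apply htb j
    calc |-2*(m j)+1| ≤ |(-2)*(m j)| + 1 := by
          have := abs_add_le ((-2)*(m j)) 1
          simpa using this
      _ ≤ 2*‖m‖+1 := by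
          rw [abs_mul]
          have h := hmj j
          norm_num
          linarith only [h]
  -- the positivity of lyap
  have hφ : 0 < lyap α K xstar n := Real.exp_pos _
  -- rewrite the generator
  have hplus : ∀ j : Fin d, lyap α K xstar (Function.update n j (n j + 1))
      = lyap α K xstar n * Real.exp ((α/K) * (2*(m j)+1)) := by
    intro j
    have h := lyap_update α K xstar n j 1
    rw [h]
    norm_num [hmdef]
  have hminus : ∀ j : Fin d, lyap α K xstar (Function.update n j (n j - 1))
      = lyap α K xstar n * Real.exp ((α/K) * (-2*(m j)+1)) := by
    intro j
    have hrw : n j - 1 = n j + (-1) := by ring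
    rw [hrw]
    have h := lyap_update α K xstar n j (-1)
    rw [h]
    norm_num [hmdef]
  have hgen : gen K B D (lyap α K xstar) n
      = lyap α K xstar n * (K * ∑ j : Fin d,
          (B x j * (Real.exp ((α/K) * (2*(m j)+1)) - 1)
            + D x j * (Real.exp ((α/K) * (-2*(m j)+1)) - 1))) := by
    rw [gen]
    rw [show WithLp.toLp 2 (fun i => (n i : ℝ) / K) = x from rfl]
    calc K * ∑ j : Fin d, (B x j * (lyap α K xstar (Function.update n j (n j + 1))
            - lyap α K xstar n)
          + D x j * (lyap α K xstar (Function.update n j (n j - 1)) - lyap α K xstar n))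
        = K * ∑ j : Fin d, (lyap α K xstar n *
            (B x j * (Real.exp ((α/K) * (2*(m j)+1)) - 1)
              + D x j * (Real.exp ((α/K) * (-2*(m j)+1)) - 1))) := by
          congr 1
          apply Finset.sum_congr rfl
          intro j _
          rw [hplus j, hminus j]
          ring
      _ = lyap α K xstar n * (K * ∑ j : Fin d,
            (B x j * (Real.exp ((α/K) * (2*(m j)+1)) - 1)
              + D x j * (Real.exp ((α/K) * (-2*(m j)+1)) - 1))) := by
          rw [← Finset.mul_sum]
          ring
  -- key sums
  set I : ℝ := ∑ j : Fin d, (B x j - D x j) * m j with hIdef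
  set S2 : ℝ := ∑ j : Fin d, (B x j + D x j) with hS2def
  set S3 : ℝ := ∑ j : Fin d, (B x j + D x j) * (8*(m j)^2 + 2) with hS3def
  -- step 1: Taylor bound on each exponential
  have hstep1 : K * ∑ j : Fin d,
      (B x j * (Real.exp ((α/K) * (2*(m j)+1)) - 1)
        + D x j * (Real.exp ((α/K) * (-2*(m j)+1)) - 1))
      ≤ α * (2*I + S2) + (α^2/K) * S3 := by
    have hterm : ∀ j : Fin d,
        B x j * (Real.exp ((α/K) * (2*(m j)+1)) - 1)
          + D x j * (Real.exp ((α/K) * (-2*(m j)+1)) - 1)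
        ≤ B x j * ((α/K) * (2*(m j)+1) + ((α/K) * (2*(m j)+1))^2)
          + D x j * ((α/K) * (-2*(m j)+1) + ((α/K) * (-2*(m j)+1))^2) := by
      intro j
      apply add_le_add
      · exact mul_le_mul_of_nonneg_left (exp_taylor2 (htp j)) (hBj0 j)
      · exact mul_le_mul_of_nonneg_left (exp_taylor2 (htm j)) (hDj0 j)
    have h1 : K * ∑ j : Fin d,
        (B x j * (Real.exp ((α/K) * (2*(m j)+1)) - 1)
          + D x j * (Real.exp ((α/K) * (-2*(m j)+1)) - 1))
        ≤ K * ∑ j : Fin d,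
        (B x j * ((α/K) * (2*(m j)+1) + ((α/K) * (2*(m j)+1))^2)
          + D x j * ((α/K) * (-2*(m j)+1) + ((α/K) * (-2*(m j)+1))^2)) := by
      apply mul_le_mul_of_nonneg_left _ hK0.le
      exact Finset.sum_le_sum fun j _ => hterm j
    refine le_trans h1 ?_
    have h2 : ∀ j : Fin d, K *
        (B x j * ((α/K) * (2*(m j)+1) + ((α/K) * (2*(m j)+1))^2)
          + D x j * ((α/K) * (-2*(m j)+1) + ((α/K) * (-2*(m j)+1))^2))
        ≤ α * (2*((B x j - D x j) * m j) + (B x j + D x j))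
          + (α^2/K) * ((B x j + D x j) * (8*(m j)^2 + 2)) := by
      intro j
      have hKne : K ≠ 0 := hK0.ne'
      have heq : K * (B x j * ((α/K) * (2*(m j)+1) + ((α/K) * (2*(m j)+1))^2)
          + D x j * ((α/K) * (-2*(m j)+1) + ((α/K) * (-2*(m j)+1))^2))
          = α * (2*((B x j - D x j) * m j) + (B x j + D x j))
            + (α^2/K) * (B x j * (2*(m j)+1)^2 + D x j * (-2*(m j)+1)^2) := by
        field_simp
        ring
      rw [heq]
      apply add_le_add le_rfl
      apply mul_le_mul_of_nonneg_left _ (by positivity : (0:ℝ) ≤ α^2/K)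
      nlinarith only [hBj0 j, hDj0 j, sq_nonneg (2*(m j) - 1), sq_nonneg (2*(m j) + 1)]
    calc K * ∑ j : Fin d,
        (B x j * ((α/K) * (2*(m j)+1) + ((α/K) * (2*(m j)+1))^2)
          + D x j * ((α/K) * (-2*(m j)+1) + ((α/K) * (-2*(m j)+1))^2))
        = ∑ j : Fin d, K *
        (B x j * ((α/K) * (2*(m j)+1) + ((α/K) * (2*(m j)+1))^2)
          + D x j * ((α/K) * (-2*(m j)+1) + ((α/K) * (-2*(m j)+1))^2)) := by
          rw [Finset.mul_sum]
      _ ≤ ∑ j : Fin d, (α * (2*((B x j - D x j) * m j) + (B x j + D x j))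
          + (α^2/K) * ((B x j + D x j) * (8*(m j)^2 + 2))) :=
          Finset.sum_le_sum fun j _ => h2 j
      _ = α * (2*I + S2) + (α^2/K) * S3 := by
          rw [Finset.sum_add_distrib, ← Finset.mul_sum, ← Finset.mul_sum,
            Finset.sum_add_distrib]
          have h2' : ∑ j : Fin d, 2*((B x j - D x j) * m j)
              = 2 * ∑ j : Fin d, (B x j - D x j) * m j := by rw [Finset.mul_sum]
          rw [h2', hIdef, hS2def, hS3def]
  -- bound on I
  have hIinner : I = ⟪B x - D x, m⟫ := by
    rw [inner_eq, hIdef]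
    apply Finset.sum_congr rfl
    intro j _
    congr 1
  have hdrift : ⟪B x - D x, x - xstar⟫ ≤ -β * ‖x‖ * ‖x - xstar‖ ^ 2 :=
    drift_ext hBlip.continuousOn hDlip.continuousOn hR0 xstar hlyapcond x hxorth hxR
  have hsplit : ⟪B x - D x, m⟫ = K * ⟪B x - D x, x - xstar⟫ + ⟪B x - D x, ε⟫ := by
    rw [hmdecomp, inner_add_right, real_inner_smul_right]
  have hBD2L : ‖B x - D x‖ ≤ 2*L*R := by
    calc ‖B x - D x‖ ≤ ‖B x‖ + ‖D x‖ := norm_sub_le _ _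
      _ ≤ L*‖x‖ + L*‖x‖ := add_le_add hBnorm hDnorm
      _ ≤ 2*L*R := by linarith only [hBnorm, hDnorm, hLxR]
  have hinner2 : ⟪B x - D x, ε⟫ ≤ 2*L*R*s := by
    calc ⟪B x - D x, ε⟫ ≤ ‖B x - D x‖ * ‖ε‖ := real_inner_le_norm _ _
      _ ≤ (2*L*R) * s := by
          apply mul_le_mul hBD2L hεs (norm_nonneg ε) (by positivity)
      _ = 2*L*R*s := by ring
  set Q : ℝ := ‖m‖^2 with hQdef
  have hQ0 : 0 ≤ Q := sq_nonneg _
  have hq0 : 0 ≤ Q/K := by positivity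
  have hqle : Q/K ≤ K*‖x - xstar‖^2 + 2*‖x - xstar‖*s + (d:ℝ) := by
    rw [div_le_iff₀ hK0]
    have hsq : Q ≤ (K*‖x - xstar‖ + s)^2 := by
      rw [hQdef]
      nlinarith only [hmnorm, norm_nonneg m]
    have hexp : (K*‖x - xstar‖ + s)^2
        = K^2*‖x - xstar‖^2 + 2*K*‖x - xstar‖*s + s^2 := by ring
    have hs2 : s^2 = (d:ℝ) := Real.sq_sqrt hd0
    have hdK : (d:ℝ) ≤ (d:ℝ)*K := by nlinarith only [hd0, hK1]
    linarith only [hsq, hexp, hs2, hdK]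
  have hI : I ≤ -β * ‖x‖ * (Q/K) + (β*R*(4*R*s + (d:ℝ)) + 2*L*R*s) := by
    rw [hIinner, hsplit]
    have h1 : K * ⟪B x - D x, x - xstar⟫ ≤ K * (-β * ‖x‖ * ‖x - xstar‖ ^ 2) :=
      mul_le_mul_of_nonneg_left hdrift hK0.le
    have e1 : Q/K - K*‖x - xstar‖^2 ≤ 2*‖x - xstar‖*s + (d:ℝ) := by linarith only [hqle]
    have e2 : β*‖x‖*(Q/K - K*‖x - xstar‖^2) ≤ β*‖x‖*(2*‖x - xstar‖*s + (d:ℝ)) :=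
      mul_le_mul_of_nonneg_left e1 (by positivity)
    have f0 : ‖x‖*(2*‖x - xstar‖*s + (d:ℝ)) ≤ R*(2*‖x - xstar‖*s + (d:ℝ)) := by
      apply mul_le_mul_of_nonneg_right hxR
      have : 0 ≤ ‖x - xstar‖ := norm_nonneg _
      positivity
    have f1 : 2*‖x - xstar‖*s ≤ 4*R*s := by
      have h := haR
      exact mul_le_mul_of_nonneg_right (by linarith only [h]) hs0
    have f2 : R*(2*‖x - xstar‖*s + (d:ℝ)) ≤ R*(4*R*s + (d:ℝ)) :=
      mul_le_mul_of_nonneg_left (by linarith only [f1]) hR0.le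
    have e3 : β*(‖x‖*(2*‖x - xstar‖*s + (d:ℝ))) ≤ β*(R*(4*R*s + (d:ℝ))) :=
      mul_le_mul_of_nonneg_left (le_trans f0 f2) hβ.le
    linarith only [h1, e2, e3, hinner2]
  -- bound on S2
  have hS2b : S2 ≤ 2*(d:ℝ)*L*R := by
    calc S2 ≤ ∑ _j : Fin d, 2*L*R := by
          apply Finset.sum_le_sum
          intro j _
          have hb := hBj j
          have hd' := hDj j
          linarith only [hb, hd', hLxR]
      _ = (d:ℝ) * (2*L*R) := by
          rw [Finset.sum_const, Finset.card_univ, Fintype.card_fin, nsmul_eq_mul]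
      _ = 2*(d:ℝ)*L*R := by ring
  have hS20 : 0 ≤ S2 := Finset.sum_nonneg fun j _ => by linarith only [hBj0 j, hDj0 j]
  -- bound on S3
  have hS3b : S3 ≤ 2*L*‖x‖*(8*Q + 2*(d:ℝ)) := by
    calc S3 ≤ ∑ j : Fin d, 2*L*‖x‖*(8*(m j)^2 + 2) := by
          apply Finset.sum_le_sum
          intro j _
          apply mul_le_mul_of_nonneg_right _ (by positivity)
          linarith only [hBj j, hDj j, hLxR]
      _ = 2*L*‖x‖*(8*(∑ j : Fin d, (m j)^2) + 2*(d:ℝ)) := by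
          rw [← Finset.mul_sum]
          congr 1
          rw [Finset.sum_add_distrib, ← Finset.mul_sum, Finset.sum_const,
            Finset.card_univ, Fintype.card_fin, nsmul_eq_mul]
          ring
      _ = 2*L*‖x‖*(8*Q + 2*(d:ℝ)) := by rw [hQdef, normsq_eq]
  have hS30 : 0 ≤ S3 := Finset.sum_nonneg fun j _ => by nlinarith only [hBj0 j, hDj0 j, sq_nonneg (m j)]
  -- assembling
  have hfinal : α * (2*I + S2) + (α^2/K) * S3
      ≤ -(α*β) * ‖x‖ * (Q/K) + C := by
    have hA : α * (2*I) ≤ -2*α*β*‖x‖*(Q/K) + 2*(β*R*(4*R*s + (d:ℝ)) + 2*L*R*s) := by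
      have g1 := mul_le_mul_of_nonneg_left hI (by linarith : (0:ℝ) ≤ 2*α)
      have hcnn : 0 ≤ β*R*(4*R*s + (d:ℝ)) + 2*L*R*s := by positivity
      have g2 : α * (β*R*(4*R*s + (d:ℝ)) + 2*L*R*s)
          ≤ 1 * (β*R*(4*R*s + (d:ℝ)) + 2*L*R*s) :=
        mul_le_mul_of_nonneg_right hα1 hcnn
      linarith only [g1, g2]
    have hB2 : α * S2 ≤ 2*(d:ℝ)*L*R := by
      calc α * S2 ≤ 1 * S2 := mul_le_mul_of_nonneg_right hα1 hS20
        _ = S2 := one_mul _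
        _ ≤ 2*(d:ℝ)*L*R := hS2b
    have hC3 : (α^2/K) * S3 ≤ 16*α^2*L*‖x‖*(Q/K) + 4*L*(d:ℝ)*R := by
      have h1 : (α^2/K) * S3 ≤ (α^2/K) * (2*L*‖x‖*(8*Q + 2*(d:ℝ))) :=
        mul_le_mul_of_nonneg_left hS3b (by positivity)
      have h2 : (α^2/K) * (2*L*‖x‖*(8*Q + 2*(d:ℝ)))
          = 16*α^2*L*‖x‖*(Q/K) + 4*α^2*L*‖x‖*((d:ℝ)/K) := by ring
      have h3 : (d:ℝ)/K ≤ (d:ℝ) := by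
        rw [div_le_iff₀ hK0]; nlinarith only [hd0, hK1]
      have h4 : 4*α^2*L*‖x‖*((d:ℝ)/K) ≤ 4*L*(d:ℝ)*R := by
        have e1 : α^2 ≤ 1 := by nlinarith only [hα1, hα0.le]
        have e2 : ‖x‖*((d:ℝ)/K) ≤ R*(d:ℝ) := by
          apply mul_le_mul hxR h3 (by positivity) hR0.le
        have e3 : α^2 * (‖x‖*((d:ℝ)/K)) ≤ 1 * (R*(d:ℝ)) :=
          mul_le_mul e1 e2 (by positivity) (by norm_num)
        have e4 : (4*L) * (α^2 * (‖x‖*((d:ℝ)/K))) ≤ (4*L) * (1 * (R*(d:ℝ))) :=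
          mul_le_mul_of_nonneg_left e3 (by linarith only [hL0])
        linarith only [e4]
      rw [h2] at h1
      linarith only [h1, h4]
    have hquad : 16*α^2*L*‖x‖*(Q/K) ≤ α*β*‖x‖*(Q/K) := by
      have huq : 0 ≤ α*(‖x‖*(Q/K)) := mul_nonneg hα0.le (mul_nonneg hx0 hq0)
      have h := mul_le_mul_of_nonneg_right hαβ huq
      linarith only [h]
    rw [hCdef]
    linarith only [hA, hB2, hC3, hquad]
  -- conclude
  rw [hgen, mul_comm (lyap α K xstar n)]
  have hE : -(α * β) * (‖toVec n‖ / K) * (‖m‖ ^ 2 / K) = -(α*β) * ‖x‖ * (‖m‖^2/K) := by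
    rw [hxnorm]
    field_simp
  apply mul_le_mul_of_nonneg_right _ hφ.le
  calc K * ∑ j : Fin d,
      (B x j * (Real.exp ((α/K) * (2*(m j)+1)) - 1)
        + D x j * (Real.exp ((α/K) * (-2*(m j)+1)) - 1))
      ≤ α * (2*I + S2) + (α^2/K) * S3 := hstep1
    _ ≤ -(α*β) * ‖x‖ * (‖m‖^2/K) + C := by rw [hQdef] at hfinal; exact hfinal
    _ = -(α * β) * (‖toVec n‖ / K) * (‖m‖ ^ 2 / K) + C := by rw [hE]
end
end

section
/- There exist α ∈ (0, 1/2), K₀ > 0, ρ > 0 and M > 4 such that for all K ≥ K₀ and all n ∈ ℤ₊^d satisfying M ≤ ‖n‖ ≤ R·K and ‖n − n*‖ ≥ ρ·√K, one has 𝓛_K φ(n) ≤ −(α·β/2)·(‖n‖/K)·(‖n − n*‖²/K) · φ(n). -/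
open scoped BigOperators RealInnerProductSpace

noncomputable section

open MultitypeBD

/-! ### Auxiliary lemmas -/

lemma aux_exp_le {t : ℝ} (h : |t| ≤ 1) : Real.exp t ≤ 1 + t + t ^ 2 := by
  have h2 := Real.exp_bound h (by norm_num : 0 < 2)
  have hs : ∑ m ∈ Finset.range 2, t ^ m / m.factorial = 1 + t := by
    simp [Finset.sum_range_succ]
  rw [hs] at h2
  have h3 := (abs_sub_le_iff.1 h2).1
  have ht2 : |t| ^ 2 = t ^ 2 := sq_abs t
  have h4 : ((Nat.succ 2 : ℕ) : ℝ) / ((Nat.factorial 2 : ℕ) * (2:ℕ)) = 3/4 := by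
    norm_num [Nat.factorial]
  rw [h4, ht2] at h3
  nlinarith [sq_nonneg t]

lemma aux_norm_sq_eq {d : ℕ} (v : EuclideanSpace ℝ (Fin d)) : ‖v‖ ^ 2 = ∑ i, v i ^ 2 := by
  rw [EuclideanSpace.norm_eq, Real.sq_sqrt (by positivity)]
  simp [sq_abs]

lemma aux_inner_eq {d : ℕ} (a b : EuclideanSpace ℝ (Fin d)) : ⟪a, b⟫ = ∑ i, a i * b i := by
  simp [PiLp.inner_apply, RCLike.inner_apply]
  exact Finset.sum_congr rfl fun _ _ => mul_comm _ _

lemma aux_coord_sq_le {d : ℕ} (v : EuclideanSpace ℝ (Fin d)) (i : Fin d) :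
    v i ^ 2 ≤ ‖v‖ ^ 2 := by
  rw [aux_norm_sq_eq]
  exact Finset.single_le_sum (f := fun i => v i ^ 2) (fun i _ => sq_nonneg _) (Finset.mem_univ i)

lemma aux_abs_coord_le {d : ℕ} (v : EuclideanSpace ℝ (Fin d)) (i : Fin d) : |v i| ≤ ‖v‖ := by
  have := Real.sqrt_le_sqrt (aux_coord_sq_le v i)
  rwa [Real.sqrt_sq_eq_abs, Real.sqrt_sq (norm_nonneg v)] at this

lemma aux_linear_bound {d : ℕ} {f : EuclideanSpace ℝ (Fin d) → EuclideanSpace ℝ (Fin d)}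
    {S : Set (EuclideanSpace ℝ (Fin d))} (h0S : (0 : EuclideanSpace ℝ (Fin d)) ∈ S)
    (hSclosed : IsClosed S) (hlip : LocallyLipschitzOn S f) (hf0 : f 0 = 0)
    (R : ℝ) :
    ∃ L : ℝ, 1 ≤ L ∧ ∀ x ∈ S, ‖x‖ ≤ R → ‖f x‖ ≤ L * ‖x‖ := by
  obtain ⟨K0, t, htmem, hlip0⟩ := hlip h0S
  rw [Metric.mem_nhdsWithin_iff] at htmem
  obtain ⟨ε, hε, hsub⟩ := htmem
  have hcpt : IsCompact (S ∩ Metric.closedBall 0 R) :=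
    (isCompact_closedBall (0 : EuclideanSpace ℝ (Fin d)) R).inter_left hSclosed
  have hcont : ContinuousOn f (S ∩ Metric.closedBall 0 R) :=
    (hlip.continuousOn).mono Set.inter_subset_left
  obtain ⟨C, hC⟩ := hcpt.exists_bound_of_continuousOn hcont
  obtain ⟨L, hL⟩ : ∃ L : ℝ, L = max (K0 : ℝ) ((max C 0 + 1) * 2 / ε) + 1 := ⟨_, rfl⟩
  have hL1 : 1 ≤ L := by
    have : (0:ℝ) ≤ max (K0 : ℝ) ((max C 0 + 1) * 2 / ε) := le_max_of_le_left K0.2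
    linarith
  refine ⟨L, hL1, fun x hx hxR => ?_⟩
  rcases lt_or_ge ‖x‖ (ε/2) with h | h
  · have hxt : x ∈ t := hsub ⟨by simpa [Metric.mem_ball] using h.trans_le (by linarith), hx⟩
    have h0t : (0 : EuclideanSpace ℝ (Fin d)) ∈ t := hsub ⟨by simpa [Metric.mem_ball], h0S⟩
    have hd := hlip0.dist_le_mul x hxt 0 h0t
    simp only [hf0, dist_zero_right] at hd
    calc ‖f x‖ ≤ K0 * ‖x‖ := hd
      _ ≤ L * ‖x‖ := by
        apply mul_le_mul_of_nonneg_right _ (norm_nonneg x)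
        have : (K0:ℝ) ≤ max (K0 : ℝ) ((max C 0 + 1) * 2 / ε) := le_max_left _ _
        linarith
  · have hfx : ‖f x‖ ≤ max C 0 := le_trans (hC x ⟨hx, by simpa using hxR⟩) (le_max_left _ _)
    have h1 : ‖f x‖ ≤ (max C 0 + 1) * 2 / ε * ‖x‖ := by
      rw [div_mul_eq_mul_div, le_div_iff₀ hε]
      nlinarith [le_max_right C 0]
    calc ‖f x‖ ≤ (max C 0 + 1) * 2 / ε * ‖x‖ := h1
      _ ≤ L * ‖x‖ := by
        apply mul_le_mul_of_nonneg_right _ (norm_nonneg x)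
        have : ((max C 0 + 1) * 2 / ε) ≤ max (K0 : ℝ) ((max C 0 + 1) * 2 / ε) := le_max_right _ _
        linarith

lemma aux_closed_cond {d : ℕ} {B D : EuclideanSpace ℝ (Fin d) → EuclideanSpace ℝ (Fin d)}
    {S : Set (EuclideanSpace ℝ (Fin d))} (hS : S = {x : EuclideanSpace ℝ (Fin d) | ∀ i, 0 ≤ x i})
    (hBc : ContinuousOn B S) (hDc : ContinuousOn D S)
    {xstar : EuclideanSpace ℝ (Fin d)} {β R : ℝ} (hR : 0 < R)
    (hcond : ∀ x : EuclideanSpace ℝ (Fin d), (∀ i, 0 ≤ x i) → ‖x‖ < R →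
      ⟪B x - D x, x - xstar⟫ ≤ -β * ‖x‖ * ‖x - xstar‖ ^ 2) :
    ∀ x ∈ S, ‖x‖ ≤ R → ⟪B x - D x, x - xstar⟫ ≤ -β * ‖x‖ * ‖x - xstar‖ ^ 2 := by
  intro x hx hxR
  set F : EuclideanSpace ℝ (Fin d) → ℝ :=
    fun y => ⟪B y - D y, y - xstar⟫ + β * ‖y‖ * ‖y - xstar‖ ^ 2 with hF
  have hFc : ContinuousWithinAt F S x := by
    apply ContinuousWithinAt.add
    · exact ContinuousWithinAt.inner ((hBc x hx).sub (hDc x hx))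
        ((continuousWithinAt_id.sub continuousWithinAt_const))
    · exact (continuousWithinAt_const.mul (continuousWithinAt_id.norm)).mul
        (((continuousWithinAt_id.sub continuousWithinAt_const).norm).pow 2)
  suffices h : F x ≤ 0 by
    rw [hF] at h; simp only at h; linarith
  have hp : Filter.Tendsto (fun t : ℝ => t • x) (nhdsWithin 1 (Set.Ico 0 1)) (nhdsWithin x S) := by
    rw [tendsto_nhdsWithin_iff]
    constructor
    · have h1 : Filter.Tendsto (fun t : ℝ => t • x) (nhds 1) (nhds ((1:ℝ) • x)) :=
        (continuous_id.smul continuous_const).tendsto 1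
      rw [one_smul] at h1
      exact h1.mono_left nhdsWithin_le_nhds
    · filter_upwards [self_mem_nhdsWithin] with t ht
      rw [hS]
      intro i
      have hx' := hx
      rw [hS] at hx'
      simpa using mul_nonneg ht.1 (hx' i)
  have hne : (nhdsWithin (1:ℝ) (Set.Ico 0 1)).NeBot := by
    apply mem_closure_iff_nhdsWithin_neBot.1
    rw [closure_Ico (by norm_num : (0:ℝ) ≠ 1)]
    exact ⟨by norm_num, le_refl 1⟩
  have htend : Filter.Tendsto (fun t : ℝ => F (t • x))
      (nhdsWithin 1 (Set.Ico 0 1)) (nhds (F x)) := hFc.tendsto.comp hp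
  apply le_of_tendsto htend
  filter_upwards [self_mem_nhdsWithin] with t ht
  have hts : ∀ i, 0 ≤ (t • x) i := by
    intro i
    have hx' := hx; rw [hS] at hx'
    simpa using mul_nonneg ht.1 (hx' i)
  have htn : ‖t • x‖ < R := by
    rw [norm_smul, Real.norm_eq_abs, abs_of_nonneg ht.1]
    calc t * ‖x‖ ≤ t * R := by nlinarith [norm_nonneg x, ht.1, ht.2]
      _ < R := by nlinarith [ht.2, ht.1]
  have := hcond (t • x) hts htn
  rw [hF]; simp only; linarith

lemma aux_lyap_update {d : ℕ} (α K : ℝ) (xstar : EuclideanSpace ℝ (Fin d))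
    (n : Fin d → ℤ) (j : Fin d) (s : ℤ) :
    lyap α K xstar (Function.update n j (n j + s)) =
      lyap α K xstar n *
        Real.exp ((α / K) * (2 * (s:ℝ) * ((n j : ℝ) - ((nstar K xstar j : ℤ) : ℝ)) + (s:ℝ)^2)) := by
  unfold lyap
  rw [← Real.exp_add, ← mul_add]
  congr 1
  have hv : ∀ i, (toVec (Function.update n j (n j + s)) - toVec (nstar K xstar)) i =
      if i = j then ((n j:ℝ) - ((nstar K xstar j : ℤ):ℝ) + (s:ℝ))
      else (toVec n - toVec (nstar K xstar)) i := by
    intro i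
    by_cases h : i = j
    · subst h
      simp [toVec, Function.update_apply]
      ring
    · simp [toVec, Function.update_apply, h]
  have hsum : ∑ i, ((toVec (Function.update n j (n j + s)) - toVec (nstar K xstar)) i ^ 2
      - (toVec n - toVec (nstar K xstar)) i ^ 2)
      = 2*(s:ℝ)*((n j:ℝ) - ((nstar K xstar j : ℤ):ℝ)) + (s:ℝ)^2 := by
    rw [Finset.sum_eq_single j]
    · rw [hv j]
      rw [if_pos rfl]
      have h2 : (toVec n - toVec (nstar K xstar)) j = (n j:ℝ) - ((nstar K xstar j : ℤ):ℝ) := by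
        simp [toVec]
      rw [h2]; ring
    · intro i _ hij
      rw [hv i, if_neg hij]; ring
    · intro h; exact absurd (Finset.mem_univ j) h
  rw [Finset.sum_sub_distrib] at hsum
  rw [aux_norm_sq_eq, aux_norm_sq_eq]
  linear_combination (α / K) * hsum

set_option maxHeartbeats 1000000 in
/-- Corollary on strict decrease of the Lyapunov function: there exist
`α ∈ (0,1/2)`, `K₀ > 0`, `ρ > 0` and `M > 4` such that for all `K ≥ K₀` and all `n ∈ ℤ₊^d`
with `M ≤ ‖toVec n‖ ≤ R·K` and `‖n − n*‖ ≥ ρ·√K`, one has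
`𝓛_K φ(n) ≤ −(α·β/2)·(‖n‖/K)·(‖n − n*‖²/K)·φ(n)`. -/
theorem lyapunov_generator_strict_decrease (d : ℕ) (hd : 1 ≤ d)
    (B D : EuclideanSpace ℝ (Fin d) → EuclideanSpace ℝ (Fin d))
    (hBnonneg : ∀ x : EuclideanSpace ℝ (Fin d), (∀ i, 0 ≤ x i) → ∀ j, 0 ≤ B x j)
    (hDnonneg : ∀ x : EuclideanSpace ℝ (Fin d), (∀ i, 0 ≤ x i) → ∀ j, 0 ≤ D x j)
    (hBlip : LocallyLipschitzOn {x : EuclideanSpace ℝ (Fin d) | ∀ i, 0 ≤ x i} B)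
    (hDlip : LocallyLipschitzOn {x : EuclideanSpace ℝ (Fin d) | ∀ i, 0 ≤ x i} D)
    (hB0 : B 0 = 0) (hD0 : D 0 = 0)
    (xstar : EuclideanSpace ℝ (Fin d)) (hxstar : ∀ i, 0 < xstar i)
    (hfix : B xstar = D xstar)
    (β R : ℝ) (hβ : 0 < β) (hR : ‖xstar‖ < R)
    (hlyapcond : ∀ x : EuclideanSpace ℝ (Fin d), (∀ i, 0 ≤ x i) → ‖x‖ < R →
      ⟪B x - D x, x - xstar⟫ ≤ -β * ‖x‖ * ‖x - xstar‖ ^ 2) :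
    ∃ α K₀ ρ M : ℝ, 0 < α ∧ α < 1 / 2 ∧ 0 < K₀ ∧ 0 < ρ ∧ 4 < M ∧
      ∀ K : ℝ, K₀ ≤ K → ∀ n : Fin d → ℤ, (∀ i, 0 ≤ n i) →
        M ≤ ‖toVec n‖ → ‖toVec n‖ ≤ R * K →
        ρ * Real.sqrt K ≤ ‖toVec n - toVec (nstar K xstar)‖ →
        gen K B D (lyap α K xstar) n ≤
          -(α * β / 2) * (‖toVec n‖ / K) * (‖toVec n - toVec (nstar K xstar)‖ ^ 2 / K)
            * lyap α K xstar n := by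
  -- basic setup
  set S : Set (EuclideanSpace ℝ (Fin d)) := {x : EuclideanSpace ℝ (Fin d) | ∀ i, 0 ≤ x i}
    with hS
  have hRpos : 0 < R := lt_of_le_of_lt (norm_nonneg xstar) hR
  have h0S : (0 : EuclideanSpace ℝ (Fin d)) ∈ S := by
    rw [hS]; intro i; simp
  have hSclosed : IsClosed S := by
    have : S = ⋂ i, {x : EuclideanSpace ℝ (Fin d) | 0 ≤ x i} := by
      ext x; simp [hS, Set.mem_iInter]
    rw [this]
    exact isClosed_iInter fun i =>
      isClosed_le continuous_const (EuclideanSpace.proj i).continuous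
  obtain ⟨LB, hLB1, hLB⟩ := aux_linear_bound h0S hSclosed hBlip hB0 R
  obtain ⟨LD, hLD1, hLD⟩ := aux_linear_bound h0S hSclosed hDlip hD0 R
  obtain ⟨L, hLdef⟩ : ∃ L : ℝ, L = max LB LD := ⟨_, rfl⟩
  have hL1 : 1 ≤ L := hLdef ▸ le_max_of_le_left hLB1
  have hL0 : 0 < L := lt_of_lt_of_le one_pos hL1
  have hBbd : ∀ x ∈ S, ‖x‖ ≤ R → ‖B x‖ ≤ L * ‖x‖ := fun x hx h =>
    (hLB x hx h).trans (mul_le_mul_of_nonneg_right (hLdef ▸ le_max_left _ _) (norm_nonneg x))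
  have hDbd : ∀ x ∈ S, ‖x‖ ≤ R → ‖D x‖ ≤ L * ‖x‖ := fun x hx h =>
    (hLD x hx h).trans (mul_le_mul_of_nonneg_right (hLdef ▸ le_max_right _ _) (norm_nonneg x))
  have hclosed := aux_closed_cond hS hBlip.continuousOn hDlip.continuousOn hRpos hlyapcond
  have hd1 : (1:ℝ) ≤ (d:ℝ) := by exact_mod_cast hd
  obtain ⟨sd, hsddef⟩ : ∃ s : ℝ, s = Real.sqrt d := ⟨_, rfl⟩
  have hsd1 : 1 ≤ sd := by
    rw [hsddef, show (1:ℝ) = Real.sqrt 1 by simp]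
    exact Real.sqrt_le_sqrt hd1
  have hsd0 : 0 < sd := lt_of_lt_of_le one_pos hsd1
  -- constants
  obtain ⟨α, hαdef⟩ : ∃ a : ℝ, a = min (1/4) (min (β/(32*d*L)) (1/(6*R+1))) := ⟨_, rfl⟩
  have hdL : (0:ℝ) < 32*d*L := by positivity
  have hα0 : 0 < α := by
    rw [hαdef]
    apply lt_min (by norm_num)
    exact lt_min (by positivity) (by positivity)
  have hα14 : α ≤ 1/4 := hαdef ▸ min_le_left _ _
  have hα32 : 32*α*d*L ≤ β := by
    have h1 : α ≤ β/(32*d*L) := hαdef ▸ le_trans (min_le_right _ _) (min_le_left _ _)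
    rw [le_div_iff₀ hdL] at h1
    linarith
  have hα6 : α*(6*R+1) ≤ 1 := by
    have h1 : α ≤ 1/(6*R+1) := hαdef ▸ le_trans (min_le_right _ _) (min_le_right _ _)
    rw [le_div_iff₀ (by positivity : (0:ℝ) < 6*R+1)] at h1
    linarith
  obtain ⟨ρ, hρdef⟩ : ∃ r : ℝ, r = Real.sqrt ((2/β)*(4*L*sd+6*d*L) + 1) := ⟨_, rfl⟩
  have hρarg : 0 < (2/β)*(4*L*sd+6*d*L) + 1 := by positivity
  have hρ0 : 0 < ρ := hρdef ▸ Real.sqrt_pos.2 hρarg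
  have hρsq : ρ^2 = (2/β)*(4*L*sd+6*d*L) + 1 := by
    rw [hρdef, Real.sq_sqrt hρarg.le]
  have hρbd : 4*L*sd + 6*d*L ≤ (β/2)*ρ^2 := by
    rw [hρsq]
    have h1 : (β/2)*((2/β)*(4*L*sd+6*d*L)) = 4*L*sd+6*d*L := by field_simp
    linarith [h1, hβ.le]
  obtain ⟨K₀, hK₀def⟩ : ∃ k : ℝ, k = max 1 (max (sd/R + 1) ((10*sd/ρ)^2 + 1)) := ⟨_, rfl⟩
  have hK₀1 : 1 ≤ K₀ := hK₀def ▸ le_max_left _ _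
  refine ⟨α, K₀, ρ, 5, hα0, lt_of_le_of_lt hα14 (by norm_num), lt_of_lt_of_le one_pos hK₀1,
    hρ0, by norm_num, ?_⟩
  intro K hKK n hn hM hRK hρK
  have hK1 : 1 ≤ K := le_trans hK₀1 hKK
  have hK0 : (0:ℝ) < K := lt_of_lt_of_le one_pos hK1
  have hKsdR : sd ≤ R * K := by
    have h1 : sd/R + 1 ≤ K := le_trans (hK₀def ▸ le_max_of_le_right (le_max_left _ _)) hKK
    have h2 := mul_le_mul_of_nonneg_left h1 hRpos.le
    rw [mul_add, mul_div_cancel₀ _ hRpos.ne'] at h2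
    linarith
  -- the scaled point x = n/K
  set x : EuclideanSpace ℝ (Fin d) := WithLp.toLp 2 (fun i => (n i : ℝ) / K)
    with hxdef
  have hxi : ∀ i, x i = (n i : ℝ) / K := fun i => by rw [hxdef]
  have hxS : x ∈ S := by
    rw [hS]
    intro i
    rw [hxi i]
    have : (0:ℝ) ≤ (n i : ℝ) := by exact_mod_cast hn i
    exact div_nonneg this hK0.le
  have hKx : K • x = toVec n := by
    ext i
    show K • x i = toVec n i
    rw [hxi i, smul_eq_mul, toVec]
    field_simp
  have hxnorm : ‖toVec n‖ = K * ‖x‖ := by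
    rw [← hKx, norm_smul, Real.norm_eq_abs, abs_of_pos hK0]
  have hxR : ‖x‖ ≤ R := by
    rw [hxnorm] at hRK
    exact le_of_mul_le_mul_left (by linarith) hK0
  have hx0 : (0:ℝ) ≤ ‖x‖ := norm_nonneg x
  -- the vectors
  set uv : EuclideanSpace ℝ (Fin d) := toVec n - toVec (nstar K xstar) with huvdef
  have huvj : ∀ j, uv j = (n j : ℝ) - ((nstar K xstar j : ℤ) : ℝ) := by
    intro j; rw [huvdef]; simp [toVec]
  set w : EuclideanSpace ℝ (Fin d) := K • xstar - toVec (nstar K xstar) with hwdef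
  have hwj : ∀ i, w i = K * xstar i - (⌊K * xstar i⌋ : ℝ) := by
    intro i; rw [hwdef]; simp [toVec, nstar]
  have hw : ‖w‖ ≤ sd := by
    have h1 : ‖w‖^2 ≤ (d:ℝ) := by
      rw [aux_norm_sq_eq]
      calc ∑ i, w i ^ 2 ≤ ∑ _i : Fin d, (1:ℝ) := by
            apply Finset.sum_le_sum
            intro i _
            rw [hwj i]
            have h2 : (⌊K * xstar i⌋ : ℝ) ≤ K * xstar i := Int.floor_le _
            have h3 : K * xstar i - 1 < (⌊K * xstar i⌋ : ℝ) := Int.sub_one_lt_floor _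
            nlinarith only [h2, h3]
        _ = (d:ℝ) := by simp
    have h2 := Real.sqrt_le_sqrt h1
    rwa [Real.sqrt_sq (norm_nonneg w), ← hsddef] at h2
  have huvw : uv = K • (x - xstar) + w := by
    ext i
    show uv i = K • (x i - xstar i) + w i
    rw [huvj i, hwj i, hxi i, smul_eq_mul]
    have h1 : K * ((n i : ℝ)/K) = (n i : ℝ) := by field_simp
    show (n i : ℝ) - ((nstar K xstar i : ℤ) : ℝ) = _
    rw [nstar, mul_sub, h1]
    ring
  -- norm of uv bounds
  have hxstarR : ‖xstar‖ ≤ R := hR.le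
  have hnstar_norm : ‖toVec (nstar K xstar)‖ ≤ K * ‖xstar‖ + sd := by
    have h0 : toVec (nstar K xstar) = K • xstar - w := by rw [hwdef]; abel
    rw [h0]
    calc ‖K • xstar - w‖ ≤ ‖K • xstar‖ + ‖w‖ := norm_sub_le _ _
      _ ≤ K * ‖xstar‖ + sd := by
          rw [norm_smul, Real.norm_eq_abs, abs_of_pos hK0]
          linarith
  have huvle : ‖uv‖ ≤ 3*R*K := by
    have h1 : K * ‖xstar‖ ≤ K * R := mul_le_mul_of_nonneg_left hxstarR hK0.le
    calc ‖uv‖ ≤ ‖toVec n‖ + ‖toVec (nstar K xstar)‖ := norm_sub_le _ _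
      _ ≤ R*K + (K * ‖xstar‖ + sd) := by linarith only [hnstar_norm, hRK]
      _ ≤ 3*R*K := by linarith only [hKsdR, h1]
  have huvge : 10*sd ≤ ‖uv‖ := by
    have h1 : (10*sd/ρ)^2 + 1 ≤ K :=
      le_trans (hK₀def ▸ le_max_of_le_right (le_max_right _ _)) hKK
    have h2 : 10*sd/ρ ≤ Real.sqrt K := by
      rw [show 10*sd/ρ = Real.sqrt ((10*sd/ρ)^2) by rw [Real.sqrt_sq (by positivity)]]
      exact Real.sqrt_le_sqrt (by linarith)
    have h3 : ρ * (10*sd/ρ) ≤ ρ * Real.sqrt K := mul_le_mul_of_nonneg_left h2 hρ0.le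
    rw [mul_div_cancel₀ _ hρ0.ne'] at h3
    linarith only [hρK, h3]
  have hsqk : ρ^2 * K ≤ ‖uv‖^2 := by
    have h0 : (0:ℝ) ≤ ρ * Real.sqrt K := by positivity
    have h1 := pow_le_pow_left₀ h0 hρK 2
    rw [mul_pow, Real.sq_sqrt hK0.le] at h1
    linarith
  have huv0 : (0:ℝ) ≤ ‖uv‖^2 := sq_nonneg _
  -- the rates at x
  set b : EuclideanSpace ℝ (Fin d) := B x with hbdef
  set dv : EuclideanSpace ℝ (Fin d) := D x with hdvdef
  have hxS' : ∀ i, 0 ≤ x i := by rw [hS] at hxS; exact hxS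
  have hbj : ∀ j, 0 ≤ b j := fun j => hBnonneg x hxS' j
  have hdvj : ∀ j, 0 ≤ dv j := fun j => hDnonneg x hxS' j
  have hbn : ‖b‖ ≤ L * ‖x‖ := hBbd x hxS hxR
  have hdvn : ‖dv‖ ≤ L * ‖x‖ := hDbd x hxS hxR
  set Sb : ℝ := ∑ j, (b j + dv j) with hSbdef
  have hSb0 : 0 ≤ Sb := Finset.sum_nonneg fun j _ => add_nonneg (hbj j) (hdvj j)
  have hSble : Sb ≤ 2*d*L*‖x‖ := by
    calc Sb ≤ ∑ _j : Fin d, 2*L*‖x‖ := by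
          apply Finset.sum_le_sum
          intro j _
          have h1 : b j ≤ ‖b‖ := le_trans (le_abs_self _) (aux_abs_coord_le b j)
          have h2 : dv j ≤ ‖dv‖ := le_trans (le_abs_self _) (aux_abs_coord_le dv j)
          linarith
      _ = 2*d*L*‖x‖ := by
          rw [Finset.sum_const, Finset.card_univ, Fintype.card_fin, nsmul_eq_mul]
          ring
  -- increments of the Lyapunov weights
  set tp : Fin d → ℝ := fun j => (α/K) * (2 * uv j + 1) with htpdef
  set tm : Fin d → ℝ := fun j => (α/K) * (-2 * uv j + 1) with htmdef
  have htpj : ∀ j, tp j = (α/K) * (2 * uv j + 1) := fun j => by rw [htpdef]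
  have htmj : ∀ j, tm j = (α/K) * (-2 * uv j + 1) := fun j => by rw [htmdef]
  set φ : ℝ := lyap α K xstar n with hφdef
  have hφ0 : 0 < φ := Real.exp_pos _
  have hupd1 : ∀ j, lyap α K xstar (Function.update n j (n j + 1)) = φ * Real.exp (tp j) := by
    intro j
    rw [show n j + 1 = n j + (1:ℤ) from rfl, aux_lyap_update, hφdef]
    congr 2
    rw [htpj j, huvj j]
    push_cast
    ring
  have hupd2 : ∀ j, lyap α K xstar (Function.update n j (n j - 1)) = φ * Real.exp (tm j) := by
    intro j
    rw [show n j - 1 = n j + (-1:ℤ) by ring, aux_lyap_update, hφdef]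
    congr 2
    rw [htmj j, huvj j]
    push_cast
    ring
  -- bounds on tp, tm
  have hαK : (0:ℝ) ≤ α/K := by positivity
  have hα1K : α*(2*(3*R*K)+1) ≤ K := by
    have h1 := mul_le_mul_of_nonneg_right hα6 hK0.le
    have h2 : (0:ℝ) ≤ α*(K-1) := mul_nonneg hα0.le (by linarith)
    nlinarith only [h1, h2, hα0, hK0, hRpos]
  have htpbd : ∀ j, |tp j| ≤ 1 ∧ |tm j| ≤ 1 := by
    intro j
    have hcoord : |uv j| ≤ ‖uv‖ := aux_abs_coord_le uv j
    constructor
    · rw [htpj j, abs_mul, abs_of_nonneg hαK]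
      have h1 : |2 * uv j + 1| ≤ 2*(3*R*K) + 1 := by
        calc |2 * uv j + 1| ≤ |2 * uv j| + 1 := by
              have := abs_add_le (2 * uv j) 1; simpa using this
          _ ≤ 2*(3*R*K)+1 := by
              rw [abs_mul]
              simp only [Nat.abs_ofNat]
              linarith only [huvle, hcoord]
      calc (α/K) * |2*uv j + 1| ≤ (α/K) * (2*(3*R*K)+1) :=
            mul_le_mul_of_nonneg_left h1 hαK
        _ ≤ 1 := by
            rw [div_mul_eq_mul_div, div_le_one hK0]
            linarith only [hα1K]
    · rw [htmj j, abs_mul, abs_of_nonneg hαK]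
      have h1 : |(-2) * uv j + 1| ≤ 2*(3*R*K) + 1 := by
        calc |(-2) * uv j + 1| ≤ |(-2) * uv j| + 1 := by
              have := abs_add_le ((-2) * uv j) 1; simpa using this
          _ ≤ 2*(3*R*K)+1 := by
              rw [abs_mul, abs_neg]
              simp only [Nat.abs_ofNat]
              linarith only [huvle, hcoord]
      calc (α/K) * |(-2)*uv j + 1| ≤ (α/K) * (2*(3*R*K)+1) :=
            mul_le_mul_of_nonneg_left h1 hαK
        _ ≤ 1 := by
            rw [div_mul_eq_mul_div, div_le_one hK0]
            linarith only [hα1K]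
  -- rewrite the generator
  set T : ℝ := ∑ j, (b j * (Real.exp (tp j) - 1) + dv j * (Real.exp (tm j) - 1)) with hTdef
  have hgen : gen K B D (lyap α K xstar) n = φ * (K * T) := by
    unfold gen
    have hbx : B (WithLp.toLp 2 (fun i => ((n i : ℝ) / K))) = b := by
      rw [← hxdef, hbdef]
    have hdx : D (WithLp.toLp 2 (fun i => ((n i : ℝ) / K))) = dv := by
      rw [← hxdef, hdvdef]
    simp only [hbx, hdx, hupd1, hupd2, ← hφdef]
    have hsum : ∑ j, (b j * (φ * Real.exp (tp j) - φ) + dv j * (φ * Real.exp (tm j) - φ))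
        = φ * ∑ j, (b j * (Real.exp (tp j) - 1) + dv j * (Real.exp (tm j) - 1)) := by
      rw [Finset.mul_sum]
      exact Finset.sum_congr rfl fun j _ => by ring
    rw [hsum, ← hTdef]
    ring
  -- the key quantities
  set I : ℝ := ⟪b - dv, uv⟫ with hIdef
  set Q : ℝ := ‖x - xstar‖^2 with hQdef
  set N : ℝ := ‖uv‖^2 with hNdef
  have hI : I ≤ -β*K*‖x‖*Q + 2*L*‖x‖*sd := by
    rw [hIdef, hQdef, huvw, inner_add_right, real_inner_smul_right]
    have h1 : ⟪b - dv, x - xstar⟫ ≤ -β * ‖x‖ * ‖x - xstar‖^2 := hclosed x hxS hxR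
    have h1' : K * ⟪b - dv, x - xstar⟫ ≤ K * (-β * ‖x‖ * ‖x - xstar‖^2) :=
      mul_le_mul_of_nonneg_left h1 hK0.le
    have h2 : ⟪b - dv, w⟫ ≤ ‖b - dv‖ * ‖w‖ := real_inner_le_norm _ _
    have h3 : ‖b - dv‖ ≤ 2*L*‖x‖ := by
      calc ‖b - dv‖ ≤ ‖b‖ + ‖dv‖ := norm_sub_le _ _
        _ ≤ 2*L*‖x‖ := by linarith
    have h4 : ‖b - dv‖ * ‖w‖ ≤ (2*L*‖x‖) * sd :=
      mul_le_mul h3 hw (norm_nonneg w) (by positivity)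
    linarith only [h1', h2, h4]
  have hgeom : (3/4) * N ≤ K^2 * Q := by
    rw [hNdef, hQdef]
    have h1 : ‖uv‖ - sd ≤ K * ‖x - xstar‖ := by
      have e1 : uv - w = K • (x - xstar) := by rw [huvw]; abel
      have e2 : ‖uv‖ - ‖w‖ ≤ ‖uv - w‖ := norm_sub_norm_le _ _
      rw [e1, norm_smul, Real.norm_eq_abs, abs_of_pos hK0] at e2
      linarith
    have h3 : (9/10)*‖uv‖ ≤ ‖uv‖ - sd := by linarith only [huvge]
    have h4 : (0:ℝ) ≤ (9/10)*‖uv‖ := by positivity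
    have h5 : ((9/10)*‖uv‖)^2 ≤ (K*‖x - xstar‖)^2 := pow_le_pow_left₀ h4 (le_trans h3 h1) 2
    nlinarith only [h5, sq_nonneg ‖uv‖, sq_nonneg (K*‖x - xstar‖)]
  -- sum manipulations
  have hT1 : T ≤ (∑ j, (b j * tp j + dv j * tm j)) + (∑ j, (b j * tp j^2 + dv j * tm j^2)) := by
    rw [hTdef, ← Finset.sum_add_distrib]
    apply Finset.sum_le_sum
    intro j _
    have h1 := aux_exp_le (htpbd j).1
    have h2 := aux_exp_le (htpbd j).2
    have h1' := mul_le_mul_of_nonneg_left h1 (hbj j)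
    have h2' := mul_le_mul_of_nonneg_left h2 (hdvj j)
    linarith only [h1', h2']
  have hIeq : I = ∑ j, (b j - dv j) * uv j := by
    rw [hIdef, aux_inner_eq]
    apply Finset.sum_congr rfl
    intro j _
    rw [PiLp.sub_apply]
  have hlin : (∑ j, (b j * tp j + dv j * tm j)) = (α/K) * (2*I + Sb) := by
    calc (∑ j, (b j * tp j + dv j * tm j))
        = ∑ j, (α/K) * (2*((b j - dv j) * uv j) + (b j + dv j)) := by
          apply Finset.sum_congr rfl
          intro j _
          rw [htpj j, htmj j]
          ring
      _ = (α/K) * ∑ j, (2*((b j - dv j) * uv j) + (b j + dv j)) := by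
          rw [Finset.mul_sum]
      _ = (α/K) * (2*(∑ j, (b j - dv j) * uv j) + ∑ j, (b j + dv j)) := by
          rw [Finset.sum_add_distrib, Finset.mul_sum]
      _ = (α/K) * (2*I + Sb) := by rw [← hIeq, ← hSbdef]
  have hquad : (∑ j, (b j * tp j^2 + dv j * tm j^2)) ≤ (α/K)^2 * (8*N+2) * Sb := by
    have hper : ∀ j, b j * tp j^2 + dv j * tm j^2 ≤ (b j + dv j) * ((α/K)^2 * (8*N+2)) := by
      intro j
      have hc := aux_coord_sq_le uv j
      have h1 : tp j^2 ≤ (α/K)^2 * (8*N+2) := by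
        rw [htpj j, mul_pow, hNdef]
        have h0 : (2*uv j+1)^2 ≤ 8*‖uv‖^2 + 2 := by nlinarith only [sq_nonneg (2*uv j - 1), hc, sq_nonneg (uv j)]
        exact mul_le_mul_of_nonneg_left h0 (sq_nonneg _)
      have h2 : tm j^2 ≤ (α/K)^2 * (8*N+2) := by
        rw [htmj j, mul_pow, hNdef]
        have h0 : (-2*uv j+1)^2 ≤ 8*‖uv‖^2 + 2 := by nlinarith only [sq_nonneg (2*uv j + 1), hc, sq_nonneg (uv j)]
        exact mul_le_mul_of_nonneg_left h0 (sq_nonneg _)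
      have h1' := mul_le_mul_of_nonneg_left h1 (hbj j)
      have h2' := mul_le_mul_of_nonneg_left h2 (hdvj j)
      linarith only [h1', h2']
    calc (∑ j, (b j * tp j^2 + dv j * tm j^2)) ≤ ∑ j, (b j + dv j) * ((α/K)^2 * (8*N+2)) :=
          Finset.sum_le_sum fun j _ => hper j
      _ = (α/K)^2 * (8*N+2) * Sb := by rw [← Finset.sum_mul, ← hSbdef]; ring
  -- assemble
  have hmain : K * (K * T) ≤ α*K*(2*I + Sb) + α^2*(8*N+2)*Sb := by
    have hA : T ≤ (α/K) * (2*I + Sb) + (α/K)^2 * (8*N+2) * Sb := by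
      rw [← hlin]; linarith only [hT1, hquad, hlin]
    have h1 : K^2 * T ≤ K^2 * ((α/K) * (2*I + Sb) + (α/K)^2 * (8*N+2) * Sb) :=
      mul_le_mul_of_nonneg_left hA (sq_nonneg K)
    have h2 : K^2 * ((α/K) * (2*I + Sb) + (α/K)^2 * (8*N+2) * Sb)
        = α*K*(2*I + Sb) + α^2*(8*N+2)*Sb := by
      field_simp
    calc K * (K * T) = K^2 * T := by ring
      _ ≤ _ := by rw [h2] at h1; exact h1
  have hfinal : α*K*(2*I + Sb) + α^2*(8*N+2)*Sb ≤ -(α*β/2)*‖x‖*N := by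
    have e1 : 2*α*K*I ≤ -(3/2)*α*β*‖x‖*N + 4*α*K*L*‖x‖*sd := by
      have h1 := mul_le_mul_of_nonneg_left hI (show (0:ℝ) ≤ 2*α*K by positivity)
      have h2 := mul_le_mul_of_nonneg_left hgeom
        (show (0:ℝ) ≤ 2*α*β*‖x‖ by positivity)
      linarith only [h1, h2]
    have e2 : α*K*Sb ≤ 2*α*K*d*L*‖x‖ := by
      have h1 := mul_le_mul_of_nonneg_left hSble (show (0:ℝ) ≤ α*K by positivity)
      linarith only [h1]
    have e3 : α^2*(8*N+2)*Sb ≤ (α*β/2)*‖x‖*N + 4*α*K*d*L*‖x‖ := by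
      have h1 : α^2*(8*N+2)*Sb ≤ α^2*(8*N+2)*(2*d*L*‖x‖) :=
        mul_le_mul_of_nonneg_left hSble (by positivity)
      have h2 := mul_le_mul_of_nonneg_left hα32
        (show (0:ℝ) ≤ (α/2)*(‖x‖*N) by positivity)
      have h3 : 4*(α^2)*(d*L*‖x‖) ≤ 4*(α*K)*(d*L*‖x‖) := by
        have hm : α*α ≤ α*K := mul_le_mul_of_nonneg_left (by linarith) hα0.le
        have := mul_le_mul_of_nonneg_right hm
          (show (0:ℝ) ≤ d*L*‖x‖ by positivity)
        nlinarith only [this]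
      linarith only [h1, h2, h3]
    have e4 : α*K*(4*L*sd + 6*d*L)*‖x‖ ≤ (α*β/2)*‖x‖*N := by
      have h1 := mul_le_mul_of_nonneg_left hρbd (show (0:ℝ) ≤ α*K*‖x‖ by positivity)
      have h3 := mul_le_mul_of_nonneg_left hsqk (show (0:ℝ) ≤ α*(β/2)*‖x‖ by positivity)
      linarith only [h1, h3]
    linarith only [e1, e2, e3, e4]
  -- conclude
  have hkey : K * T ≤ -(α*β/2) * (‖toVec n‖/K) * (N/K) := by
    have hrhs : -(α*β/2) * (‖toVec n‖/K) * (N/K) = (-(α*β/2)*‖x‖*N)/K := by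
      rw [hxnorm]
      field_simp
    rw [hrhs, le_div_iff₀ hK0]
    linarith only [hmain, hfinal]
  rw [hgen]
  calc φ * (K * T) ≤ φ * (-(α*β/2) * (‖toVec n‖/K) * (N/K)) :=
        mul_le_mul_of_nonneg_left hkey hφ0.le
    _ = -(α * β / 2) * (‖toVec n‖ / K) * (N / K) * φ := by ring
end
end

section
/- Assume λ_j(n) > 0 and μ_j(n) > 0 for every j ∈ {1,…,d} and every n ∈ E. Then there exists a function π : E → (0,∞) satisfying π(n)·λ_j(n) = μ_j(n + e_j)·π(n + e_j) for all j and all n ∈ E if and only if for every circuit (n⁽¹⁾, …, n⁽ᵏ⁾, n⁽ᵏ⁺¹⁾) contained in E one has ∏_{ℓ=1}^{k} ρ(ε^{(j_ℓ)}, n⁽ˡ⁾) = 1. -/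
open scoped BigOperators

noncomputable section

namespace SelfAdjointBD

variable {d : ℕ}

/-- The `j`-th standard basis vector of `ℤ^d`. -/
def unitvec (j : Fin d) : Fin d → ℤ := fun i => if i = j then 1 else 0

/-- The state space `E = ℤ₊^d \ {0}`. -/
def E (d : ℕ) : Set (Fin d → ℤ) := {n | (∀ i, 0 ≤ n i) ∧ n ≠ 0}

/-- `ρ(ε^{(j)}, n)`: for `ε^{(j)} = +e_j` (sign `true`) this is `λ_j(n)/μ_j(n+e_j)`,
and for `ε^{(j)} = −e_j` (sign `false`) it is `μ_j(n)/λ_j(n−e_j)`. -/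
def rho (lam mu : Fin d → (Fin d → ℤ) → ℝ) (s : Bool) (j : Fin d) (n : Fin d → ℤ) : ℝ :=
  if s then lam j n / mu j (n + unitvec j) else mu j n / lam j (n - unitvec j)

end SelfAdjointBD

open SelfAdjointBD

namespace SAux

variable {d : ℕ}

def step (p : Bool × Fin d) : Fin d → ℤ := if p.1 then unitvec p.2 else -unitvec p.2

def endpt (a : Fin d → ℤ) : List (Bool × Fin d) → (Fin d → ℤ)
  | [] => a
  | p :: L => endpt (a + step p) L

def valid (a : Fin d → ℤ) : List (Bool × Fin d) → Prop
  | [] => a ∈ E d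
  | p :: L => a ∈ E d ∧ valid (a + step p) L

def wt (lam mu : Fin d → (Fin d → ℤ) → ℝ) (a : Fin d → ℤ) : List (Bool × Fin d) → ℝ
  | [] => 1
  | p :: L => rho lam mu p.1 p.2 a * wt lam mu (a + step p) L

lemma endpt_append (a : Fin d → ℤ) (L M : List (Bool × Fin d)) :
    endpt a (L ++ M) = endpt (endpt a L) M := by
  induction L generalizing a with
  | nil => simp [endpt]
  | cons p L ih => simp [endpt, ih]

lemma valid_mem {a : Fin d → ℤ} {L : List (Bool × Fin d)} (h : valid a L) : a ∈ E d := by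
  cases L with
  | nil => exact h
  | cons p L => exact h.1

lemma valid_endpt {a : Fin d → ℤ} {L : List (Bool × Fin d)} (h : valid a L) :
    endpt a L ∈ E d := by
  induction L generalizing a with
  | nil => exact h
  | cons p L ih => exact ih h.2

lemma valid_append {a : Fin d → ℤ} {L M : List (Bool × Fin d)} :
    valid a (L ++ M) ↔ valid a L ∧ valid (endpt a L) M := by
  induction L generalizing a with
  | nil =>
    simp only [List.nil_append, endpt, valid]
    exact ⟨fun h => ⟨valid_mem h, h⟩, fun h => h.2⟩
  | cons p L ih =>
    simp only [List.cons_append, valid, endpt]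
    rw [ih, and_assoc]

lemma wt_append (lam mu : Fin d → (Fin d → ℤ) → ℝ) (a : Fin d → ℤ)
    (L M : List (Bool × Fin d)) :
    wt lam mu a (L ++ M) = wt lam mu a L * wt lam mu (endpt a L) M := by
  induction L generalizing a with
  | nil => simp [wt, endpt]
  | cons p L ih => simp [wt, endpt, ih, mul_assoc]

variable {lam mu : Fin d → (Fin d → ℤ) → ℝ}

lemma rho_pos (hlam : ∀ j, ∀ n ∈ E d, 0 < lam j n) (hmu : ∀ j, ∀ n ∈ E d, 0 < mu j n)
    {p : Bool × Fin d} {a : Fin d → ℤ} (ha : a ∈ E d) (hb : a + step p ∈ E d) :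
    0 < rho lam mu p.1 p.2 a := by
  obtain ⟨s, j⟩ := p
  cases s with
  | true =>
    simp only [rho, if_pos rfl]
    have hb' : a + unitvec j ∈ E d := by simpa [step] using hb
    exact div_pos (hlam j a ha) (hmu j _ hb')
  | false =>
    simp only [rho]
    have hb' : a - unitvec j ∈ E d := by simpa [step, sub_eq_add_neg] using hb
    simpa using div_pos (hmu j a ha) (hlam j _ hb')

lemma wt_pos (hlam : ∀ j, ∀ n ∈ E d, 0 < lam j n) (hmu : ∀ j, ∀ n ∈ E d, 0 < mu j n)
    {a : Fin d → ℤ} {L : List (Bool × Fin d)} (h : valid a L) :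
    0 < wt lam mu a L := by
  induction L generalizing a with
  | nil => simp [wt]
  | cons p L ih =>
    exact mul_pos (rho_pos hlam hmu h.1 (valid_mem h.2)) (ih h.2)

def flipp (p : Bool × Fin d) : Bool × Fin d := (!p.1, p.2)

def rev (L : List (Bool × Fin d)) : List (Bool × Fin d) := (L.map flipp).reverse

lemma step_flipp (p : Bool × Fin d) : step (flipp p) = -step p := by
  obtain ⟨s, j⟩ := p; cases s <;> simp [step, flipp]

lemma rev_cons (p : Bool × Fin d) (L : List (Bool × Fin d)) :
    rev (p :: L) = rev L ++ [flipp p] := by simp [rev]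

lemma endpt_rev (a : Fin d → ℤ) (L : List (Bool × Fin d)) :
    endpt (endpt a L) (rev L) = a := by
  induction L generalizing a with
  | nil => simp [rev, endpt]
  | cons p L ih =>
    rw [rev_cons]
    simp only [endpt]
    rw [endpt_append, ih]
    show endpt (a + step p + step (flipp p)) [] = a
    rw [step_flipp]
    simp [endpt]

lemma valid_rev {a : Fin d → ℤ} {L : List (Bool × Fin d)} (h : valid a L) :
    valid (endpt a L) (rev L) := by
  induction L generalizing a with
  | nil => simpa [rev, endpt] using h
  | cons p L ih =>
    rw [rev_cons]
    show valid (endpt (a + step p) L) (rev L ++ [flipp p])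
    rw [valid_append, endpt_rev]
    refine ⟨ih h.2, valid_mem h.2, ?_⟩
    show valid (a + step p + step (flipp p)) []
    rw [step_flipp]
    simpa [valid] using h.1

lemma rho_flipp (hlam : ∀ j, ∀ n ∈ E d, 0 < lam j n) (hmu : ∀ j, ∀ n ∈ E d, 0 < mu j n)
    {p : Bool × Fin d} {a : Fin d → ℤ} (ha : a ∈ E d) (hb : a + step p ∈ E d) :
    rho lam mu (!p.1) p.2 (a + step p) = (rho lam mu p.1 p.2 a)⁻¹ := by
  obtain ⟨s, j⟩ := p
  cases s with
  | true =>
    have hb' : a + unitvec j ∈ E d := by simpa [step] using hb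
    have h1 := (hlam j a ha).ne'
    have h2 := (hmu j _ hb').ne'
    simp [rho, step, add_sub_cancel_right, inv_div]
  | false =>
    have hb' : a - unitvec j ∈ E d := by simpa [step, sub_eq_add_neg] using hb
    have h1 := (hmu j a ha).ne'
    have h2 := (hlam j _ hb').ne'
    simp [rho, step, ← sub_eq_add_neg, sub_add_cancel, inv_div]

lemma wt_rev (hlam : ∀ j, ∀ n ∈ E d, 0 < lam j n) (hmu : ∀ j, ∀ n ∈ E d, 0 < mu j n)
    {a : Fin d → ℤ} {L : List (Bool × Fin d)} (h : valid a L) :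
    wt lam mu (endpt a L) (rev L) = (wt lam mu a L)⁻¹ := by
  induction L generalizing a with
  | nil => simp [rev, wt]
  | cons p L ih =>
    rw [rev_cons]
    show wt lam mu (endpt (a + step p) L) (rev L ++ [flipp p]) = _
    rw [wt_append, ih h.2, endpt_rev]
    have : wt lam mu (a + step p) [flipp p] = (rho lam mu p.1 p.2 a)⁻¹ := by
      simp only [wt]
      rw [show (flipp p).1 = !p.1 from rfl, show (flipp p).2 = p.2 from rfl]
      rw [rho_flipp hlam hmu h.1 (valid_mem h.2)]
      ring
    rw [this]
    show _ = (rho lam mu p.1 p.2 a * wt lam mu (a + step p) L)⁻¹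
    rw [mul_inv]
    ring

lemma valid_take {a : Fin d → ℤ} {L : List (Bool × Fin d)} (h : valid a L) (ℓ : ℕ) :
    valid a (L.take ℓ) := by
  induction L generalizing a ℓ with
  | nil => simpa using h
  | cons p L ih =>
    cases ℓ with
    | zero => exact valid_mem h
    | succ ℓ => exact ⟨h.1, ih h.2 ℓ⟩

lemma endpt_take_succ (q : Bool × Fin d) (L : List (Bool × Fin d)) (a : Fin d → ℤ)
    (ℓ : ℕ) (hℓ : ℓ < L.length) :
    endpt a (L.take (ℓ + 1)) = endpt a (L.take ℓ) + step (L.getD ℓ q) := by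
  induction L generalizing a ℓ with
  | nil => simp at hℓ
  | cons p L ih =>
    cases ℓ with
    | zero => simp [endpt]
    | succ ℓ =>
      simp only [List.take_succ_cons, List.getD_cons_succ, endpt]
      exact ih _ _ (by simpa using hℓ)

lemma wt_eq_prod (lam mu : Fin d → (Fin d → ℤ) → ℝ) (q : Bool × Fin d)
    (L : List (Bool × Fin d)) (a : Fin d → ℤ) :
    wt lam mu a L = ∏ ℓ ∈ Finset.range L.length,
      rho lam mu (L.getD ℓ q).1 (L.getD ℓ q).2 (endpt a (L.take ℓ)) := by
  induction L generalizing a with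
  | nil => simp [wt]
  | cons p L ih =>
    rw [List.length_cons, Finset.prod_range_succ']
    simp only [List.getD_cons_succ, List.take_succ_cons, List.getD_cons_zero,
      List.take_zero, endpt, wt]
    rw [ih (a + step p)]
    ring

lemma circuit_wt_one (hd : 1 ≤ d) {lam mu : Fin d → (Fin d → ℤ) → ℝ}
    (H : ∀ (k : ℕ), 1 ≤ k → ∀ (n : ℕ → (Fin d → ℤ)) (j : ℕ → Fin d) (s : ℕ → Bool),
          (∀ ℓ, ℓ ≤ k → n ℓ ∈ E d) → n k = n 0 →
          (∀ ℓ, ℓ < k →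
            n (ℓ + 1) = n ℓ + (if s ℓ then unitvec (j ℓ) else -unitvec (j ℓ))) →
          ∏ ℓ ∈ Finset.range k, rho lam mu (s ℓ) (j ℓ) (n ℓ) = 1)
    {a : Fin d → ℤ} {L : List (Bool × Fin d)} (hne : L ≠ [])
    (hv : valid a L) (he : endpt a L = a) : wt lam mu a L = 1 := by
  set q : Bool × Fin d := (true, ⟨0, hd⟩) with hq
  have hk : 1 ≤ L.length := List.length_pos_iff.mpr hne
  have := H L.length hk (fun ℓ => endpt a (L.take ℓ))
      (fun ℓ => (L.getD ℓ q).2) (fun ℓ => (L.getD ℓ q).1)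
      (fun ℓ _ => valid_endpt (valid_take hv ℓ))
      (by simp [he, endpt, List.take_length])
      (fun ℓ hℓ => endpt_take_succ q L a ℓ hℓ)
  rw [wt_eq_prod lam mu q L a]
  exact this

lemma add_unitvec_mem {n : Fin d → ℤ} (h : n ∈ E d) (j : Fin d) :
    n + unitvec j ∈ E d := by
  obtain ⟨h1, h2⟩ := h
  refine ⟨fun i => ?_, fun h0 => ?_⟩
  · have := h1 i
    simp only [Pi.add_apply, unitvec]
    split <;> omega
  · have := congrFun h0 j
    have := h1 j
    simp [unitvec] at *
    omega

def S (n : Fin d → ℤ) : ℕ := ∑ i, (n i).toNat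

lemma one_le_S {n : Fin d → ℤ} (h : n ∈ E d) : 1 ≤ S n := by
  by_contra hc
  apply h.2
  have hz : S n = 0 := by omega
  funext i
  have h1 := h.1 i
  have : (n i).toNat = 0 := by
    by_contra h0
    have : 1 ≤ S n := Finset.single_le_sum (f := fun i => (n i).toNat)
      (fun _ _ => Nat.zero_le _) (Finset.mem_univ i) |>.trans' (by omega)
    omega
  simp only [Pi.zero_apply]
  omega

lemma exists_coord {n : Fin d → ℤ} (h : n ∈ E d) : ∃ j, 1 ≤ n j := by
  by_contra hc
  push_neg at hc
  exact h.2 (funext fun i => by have := h.1 i; have := hc i; simp; omega)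

lemma unitvec_mem (j : Fin d) : unitvec j ∈ E d := by
  refine ⟨fun i => ?_, fun h0 => ?_⟩
  · show (0:ℤ) ≤ if i = j then 1 else 0
    split <;> norm_num
  have := congrFun h0 j
  simp [unitvec] at this

lemma exists_path (hd : 1 ≤ d) {n : Fin d → ℤ} (hn : n ∈ E d) :
    ∃ L, valid (unitvec (⟨0, hd⟩ : Fin d)) L ∧ endpt (unitvec (⟨0, hd⟩ : Fin d)) L = n := by
  set j0 : Fin d := ⟨0, hd⟩
  have ha : unitvec j0 ∈ E d := unitvec_mem j0
  suffices H : ∀ N, ∀ n ∈ E d, S n = N →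
      ∃ L, valid (unitvec j0) L ∧ endpt (unitvec j0) L = n by
    exact H (S n) n hn rfl
  intro N
  induction N using Nat.strong_induction_on with
  | _ N ih =>
    intro n hn hSn
    obtain ⟨j, hj⟩ := exists_coord hn
    by_cases hc : S n = 1
    · -- n = unitvec j
      have hnu : n = unitvec j := by
        funext i
        by_cases hij : i = j
        · subst hij
          have hle : (n i).toNat ≤ 1 := hc ▸ Finset.single_le_sum
            (f := fun i => (n i).toNat) (fun _ _ => Nat.zero_le _) (Finset.mem_univ i)
          show n i = if i = i then 1 else 0
          rw [if_pos rfl]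
          omega
        · have h1 : (n j).toNat + (n i).toNat ≤ S n := by
            have h3 := Finset.add_sum_erase Finset.univ (fun i => (n i).toNat)
              (Finset.mem_univ j)
            have h2 : (n i).toNat ≤ ∑ x ∈ Finset.univ.erase j, (n x).toNat :=
              Finset.single_le_sum (f := fun x => (n x).toNat) (fun _ _ => Nat.zero_le _)
                (Finset.mem_erase.mpr ⟨hij, Finset.mem_univ i⟩)
            unfold S
            omega
          have := hn.1 i
          show n i = if i = j then 1 else 0
          rw [if_neg hij]
          omega
      by_cases hjj : j = j0
      · exact ⟨[], ha, by subst hjj; rw [hnu]; rfl⟩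
      · refine ⟨[(true, j), (false, j0)], ?_, ?_⟩
        · refine ⟨ha, ?_, ?_⟩
          · show unitvec j0 + step (true, j) ∈ E d
            have : step ((true : Bool), j) = unitvec j := by simp [step]
            rw [this]
            exact add_unitvec_mem ha j
          · show valid (unitvec j0 + step (true, j) + step (false, j0)) []
            have h1 : step ((true : Bool), j) = unitvec j := by simp [step]
            have h2 : step ((false : Bool), j0) = -unitvec j0 := by simp [step]
            rw [h1, h2]
            have : unitvec j0 + unitvec j + -unitvec j0 = n := by rw [hnu]; abel
            rw [this]
            exact hn
        · show endpt (unitvec j0) [(true, j), (false, j0)] = n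
          have h1 : step ((true : Bool), j) = unitvec j := by simp [step]
          have h2 : step ((false : Bool), j0) = -unitvec j0 := by simp [step]
          simp only [endpt, h1, h2]
          rw [hnu]; abel
    · -- S n ≥ 2
      have hS2 : 2 ≤ S n := by have := one_le_S hn; omega
      set m : Fin d → ℤ := n - unitvec j with hm
      have hmn : m + unitvec j = n := sub_add_cancel n (unitvec j)
      have hmj : m j = n j - 1 := by simp [hm, unitvec]
      have hmi : ∀ i, i ≠ j → m i = n i := fun i hi => by simp [hm, unitvec, hi]
      have hkey : S m + 1 = S n := by
        unfold S
        rw [← Finset.sum_erase_add _ _ (Finset.mem_univ j),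
          ← Finset.sum_erase_add (f := fun i => (n i).toNat) _ (Finset.mem_univ j)]
        rw [Finset.sum_congr rfl (fun i hi => by
          rw [hmi i (Finset.ne_of_mem_erase hi)])]
        rw [hmj]
        omega
      have hmnn : ∀ i, 0 ≤ m i := by
        intro i
        by_cases hij : i = j
        · subst hij; omega
        · rw [hmi i hij]; exact hn.1 i
      have hmne : m ≠ 0 := by
        intro h0
        have : S m = 0 := by unfold S; rw [h0]; simp
        omega
      obtain ⟨L, hv, he⟩ := ih (S m) (by omega) m ⟨hmnn, hmne⟩ rfl
      refine ⟨L ++ [(true, j)], ?_, ?_⟩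
      · rw [valid_append, he]
        refine ⟨hv, ⟨hmnn, hmne⟩, ?_⟩
        show valid (m + step (true, j)) []
        have h1 : step ((true : Bool), j) = unitvec j := by simp [step]
        rw [h1, hmn]
        exact hn
      · rw [endpt_append, he]
        show endpt m [(true, j)] = n
        have h1 : step ((true : Bool), j) = unitvec j := by simp [step]
        simp only [endpt, h1, hmn]

end SAux

open SAux

/-- Kolmogorov-type criterion: assuming all rates are positive on `E`,
a positive function `π` on `E` satisfying the detailed-balance relations
`π(n)·λ_j(n) = μ_j(n+e_j)·π(n+e_j)` exists if and only if for every circuit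
`(n⁽¹⁾, …, n⁽ᵏ⁾, n⁽ᵏ⁺¹⁾)` contained in `E` the product `∏_{ℓ=1}^{k} ρ(ε^{(j_ℓ)}, n⁽ˡ⁾)`
equals `1`. -/
theorem detailed_balance_measure_exists_iff_circuit_condition (d : ℕ) (hd : 1 ≤ d)
    (lam mu : Fin d → (Fin d → ℤ) → ℝ)
    (hlam : ∀ j, ∀ n ∈ E d, 0 < lam j n) (hmu : ∀ j, ∀ n ∈ E d, 0 < mu j n) :
    (∃ π : (Fin d → ℤ) → ℝ, (∀ n ∈ E d, 0 < π n) ∧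
        ∀ j : Fin d, ∀ n ∈ E d,
          π n * lam j n = mu j (n + unitvec j) * π (n + unitvec j))
      ↔ (∀ (k : ℕ), 1 ≤ k → ∀ (n : ℕ → (Fin d → ℤ)) (j : ℕ → Fin d) (s : ℕ → Bool),
          (∀ ℓ, ℓ ≤ k → n ℓ ∈ E d) → n k = n 0 →
          (∀ ℓ, ℓ < k →
            n (ℓ + 1) = n ℓ + (if s ℓ then unitvec (j ℓ) else -unitvec (j ℓ))) →
          ∏ ℓ ∈ Finset.range k, rho lam mu (s ℓ) (j ℓ) (n ℓ) = 1) := by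
  classical
  constructor
  · rintro ⟨π, hπpos, hdb⟩ k hk n j s hmem hcyc hstep
    have key : ∀ m, m ≤ k →
        (∏ ℓ ∈ Finset.range m, rho lam mu (s ℓ) (j ℓ) (n ℓ)) * π (n 0) = π (n m) := by
      intro m hm
      induction m with
      | zero => simp
      | succ m ihm =>
        have hm' : m ≤ k := by omega
        have hmemm : n m ∈ E d := hmem m hm'
        have hmem1 : n (m + 1) ∈ E d := hmem (m + 1) hm
        have hstep' := hstep m (by omega)
        rw [Finset.prod_range_succ, mul_right_comm, ihm hm']
        cases hsm : s m with
        | true =>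
          rw [hsm] at hstep'
          norm_num at hstep'
          have hdb' := hdb (j m) (n m) hmemm
          have hmune : mu (j m) (n m + unitvec (j m)) ≠ 0 := by
            have h' : n m + unitvec (j m) ∈ E d := by rwa [hstep'] at hmem1
            exact (hmu _ _ h').ne'
          simp only [rho]
          norm_num
          rw [hstep']
          field_simp
          linarith [hdb']
        | false =>
          rw [hsm] at hstep'
          norm_num at hstep'
          have hstep'' : n (m + 1) = n m - unitvec (j m) := by
            rw [hstep', sub_eq_add_neg]
          have hadd : n (m + 1) + unitvec (j m) = n m := by
            rw [hstep'']; exact sub_add_cancel _ _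
          have hdb' := hdb (j m) (n (m + 1)) hmem1
          rw [hadd] at hdb'
          have hlamne : lam (j m) (n (m + 1)) ≠ 0 := (hlam _ _ hmem1).ne'
          simp only [rho]
          norm_num
          rw [← hstep'']
          field_simp
          linarith [hdb']
    have hkey := key k le_rfl
    rw [hcyc] at hkey
    have h0 : 0 < π (n 0) := hπpos _ (hmem 0 (by omega))
    have : (∏ ℓ ∈ Finset.range k, rho lam mu (s ℓ) (j ℓ) (n ℓ)) * π (n 0) = 1 * π (n 0) := by
      rw [hkey, one_mul]
    exact mul_right_cancel₀ h0.ne' this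
  · intro H
    set a : Fin d → ℤ := unitvec (⟨0, hd⟩ : Fin d) with ha
    have indep : ∀ L1 L2 : List (Bool × Fin d), valid a L1 → valid a L2 →
        endpt a L1 = endpt a L2 → SAux.wt lam mu a L1 = SAux.wt lam mu a L2 := by
      intro L1 L2 hv1 hv2 hee
      by_cases h1 : L1 = []
      · subst h1
        by_cases h2 : L2 = []
        · subst h2; rfl
        · have he2 : endpt a L2 = a := hee.symm
          rw [show SAux.wt lam mu a [] = 1 from rfl,
            circuit_wt_one hd H h2 hv2 he2]
      · have hvr : valid (endpt a L1) (rev L2) := hee ▸ valid_rev hv2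
        have hM : valid a (L1 ++ rev L2) := valid_append.mpr ⟨hv1, hvr⟩
        have heM : endpt a (L1 ++ rev L2) = a := by
          rw [endpt_append, hee, endpt_rev]
        have hw := circuit_wt_one hd H
          (fun h => h1 (List.append_eq_nil_iff.mp h).1) hM heM
        rw [wt_append, hee, wt_rev hlam hmu hv2] at hw
        have h2pos : 0 < SAux.wt lam mu a L2 := wt_pos hlam hmu hv2
        field_simp at hw
        exact hw
    refine ⟨fun b => if h : b ∈ E d then SAux.wt lam mu a (exists_path hd h).choose else 1,
      ?_, ?_⟩
    · intro b hb
      dsimp only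
      rw [dif_pos hb]
      exact wt_pos hlam hmu (exists_path hd hb).choose_spec.1
    · intro j b hb
      have hb' : b + unitvec j ∈ E d := add_unitvec_mem hb j
      dsimp only
      rw [dif_pos hb, dif_pos hb']
      obtain ⟨hv, he⟩ := (exists_path hd hb).choose_spec
      obtain ⟨hv', he'⟩ := (exists_path hd hb').choose_spec
      set L := (exists_path hd hb).choose
      set L' := (exists_path hd hb').choose
      have hstepj : SAux.step ((true : Bool), j) = unitvec j := by simp [SAux.step]
      have hvL2 : valid a (L ++ [(true, j)]) := by
        rw [valid_append, he]
        refine ⟨hv, hb, ?_⟩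
        show valid (b + SAux.step (true, j)) []
        rw [hstepj]
        exact hb'
      have heL2 : endpt a (L ++ [(true, j)]) = b + unitvec j := by
        rw [endpt_append, he]
        show endpt (b + SAux.step (true, j)) [] = _
        rw [hstepj]
        rfl
      have hiw : SAux.wt lam mu a L' = SAux.wt lam mu a (L ++ [(true, j)]) :=
        indep L' (L ++ [(true, j)]) hv' hvL2 (by rw [he', heL2])
      rw [hiw, wt_append, he]
      have : SAux.wt lam mu b [(true, j)] = lam j b / mu j (b + unitvec j) := by
        simp [SAux.wt, rho]
      rw [this]
      have hmune : mu j (b + unitvec j) ≠ 0 := (hmu _ _ hb').ne'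
      field_simp
end
end

section
/- The equality [λ_1(n)/μ_1(n+e₁)] · [λ_2(n+e₁)/μ_2(n+e₁+e₂)] · [μ_1(n+e₁+e₂)/λ_1(n+e₂)] · [μ_2(n+e₂)/λ_2(n)] = 1 holds for every n = (n₁, n₂) with n₁ ≥ 1 and n₂ ≥ 1 if and only if c₁₁ = c₁₂, c₂₁ = c₂₂ and μ₁·c₂₁ = μ₂·c₁₂. -/
noncomputable section

namespace TwoTypeLV

/-- Birth rate of type 1: `λ_1(n₁,n₂) = λ₁·n₁`. -/
def lamRate1 (lam1 : ℝ) (n1 n2 : ℕ) : ℝ := lam1 * n1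

/-- Death rate of type 1: `μ_1(n₁,n₂) = n₁·(μ₁ + c₁₁·n₁ + c₁₂·n₂)`. -/
def muRate1 (mu1 c11 c12 : ℝ) (n1 n2 : ℕ) : ℝ := n1 * (mu1 + c11 * n1 + c12 * n2)

/-- Birth rate of type 2: `λ_2(n₁,n₂) = λ₂·n₂`. -/
def lamRate2 (lam2 : ℝ) (n1 n2 : ℕ) : ℝ := lam2 * n2

/-- Death rate of type 2: `μ_2(n₁,n₂) = n₂·(μ₂ + c₂₁·n₁ + c₂₂·n₂)`. -/
def muRate2 (mu2 c21 c22 : ℝ) (n1 n2 : ℕ) : ℝ := n2 * (mu2 + c21 * n1 + c22 * n2)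

end TwoTypeLV

open TwoTypeLV

private lemma circuit_key (lam1 lam2 mu1 mu2 c11 c12 c21 c22 : ℝ)
    (hlam1 : 0 < lam1) (hlam2 : 0 < lam2) (hmu1 : 0 ≤ mu1) (hmu2 : 0 ≤ mu2)
    (hc11 : 0 ≤ c11) (hc22 : 0 ≤ c22) (hc12 : 0 < c12) (hc21 : 0 < c21)
    (n1 n2 : ℕ) (h1 : 1 ≤ n1) (h2 : 1 ≤ n2) :
    ((lamRate1 lam1 n1 n2 / muRate1 mu1 c11 c12 (n1 + 1) n2)
          * (lamRate2 lam2 (n1 + 1) n2 / muRate2 mu2 c21 c22 (n1 + 1) (n2 + 1))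
          * (muRate1 mu1 c11 c12 (n1 + 1) (n2 + 1) / lamRate1 lam1 n1 (n2 + 1))
          * (muRate2 mu2 c21 c22 n1 (n2 + 1) / lamRate2 lam2 n1 n2) = 1)
      ↔ c12 * (mu2 + c21 * n1 + c22 * (n2 + 1)) = c21 * (mu1 + c11 * (n1 + 1) + c12 * n2) := by
  have hn1 : (1:ℝ) ≤ (n1:ℝ) := by exact_mod_cast h1
  have hn2 : (1:ℝ) ≤ (n2:ℝ) := by exact_mod_cast h2
  have hn1p : (0:ℝ) < (n1:ℝ) := by linarith
  have hn2p : (0:ℝ) < (n2:ℝ) := by linarith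
  have hA : 0 < mu1 + c11 * ((n1:ℝ) + 1) + c12 * n2 := by nlinarith
  have hA' : 0 < mu1 + c11 * ((n1:ℝ) + 1) + c12 * ((n2:ℝ) + 1) := by nlinarith
  have hB : 0 < mu2 + c21 * (n1:ℝ) + c22 * ((n2:ℝ) + 1) := by nlinarith
  have hB' : 0 < mu2 + c21 * ((n1:ℝ) + 1) + c22 * ((n2:ℝ) + 1) := by nlinarith
  simp only [lamRate1, lamRate2, muRate1, muRate2]
  push_cast
  rw [div_mul_div_comm, div_mul_div_comm, div_mul_div_comm,
    div_eq_one_iff_eq (by positivity)]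
  have hK : (0:ℝ) < lam1 * n1 * (lam2 * n2) * ((n1:ℝ)+1) * ((n2:ℝ)+1) := by positivity
  constructor
  · intro h
    have h0 : lam1 * n1 * (lam2 * n2) * ((n1:ℝ)+1) * ((n2:ℝ)+1) *
        (c12 * (mu2 + c21 * n1 + c22 * (n2 + 1))
          - c21 * (mu1 + c11 * (n1 + 1) + c12 * n2)) = 0 := by linear_combination h
    rcases mul_eq_zero.mp h0 with h' | h'
    · exact absurd h' hK.ne'
    · linarith
  · intro h
    linear_combination (lam1 * n1 * (lam2 * n2) * ((n1:ℝ)+1) * ((n2:ℝ)+1)) * h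


/-- for the two-type competition model, the circuit condition
`[λ_1(n)/μ_1(n+e₁)]·[λ_2(n+e₁)/μ_2(n+e₁+e₂)]·[μ_1(n+e₁+e₂)/λ_1(n+e₂)]·[μ_2(n+e₂)/λ_2(n)] = 1`
for all `n = (n₁,n₂)` with `n₁ ≥ 1`, `n₂ ≥ 1` holds if and only if
`c₁₁ = c₁₂`, `c₂₁ = c₂₂` and `μ₁·c₂₁ = μ₂·c₁₂`. -/
theorem twotype_circuit_condition_iff (lam1 lam2 mu1 mu2 c11 c12 c21 c22 : ℝ)
    (hlam1 : 0 < lam1) (hlam2 : 0 < lam2) (hmu1 : 0 ≤ mu1) (hmu2 : 0 ≤ mu2)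
    (hc11 : 0 ≤ c11) (hc22 : 0 ≤ c22) (hc12 : 0 < c12) (hc21 : 0 < c21) :
    (∀ n1 n2 : ℕ, 1 ≤ n1 → 1 ≤ n2 →
        (lamRate1 lam1 n1 n2 / muRate1 mu1 c11 c12 (n1 + 1) n2)
          * (lamRate2 lam2 (n1 + 1) n2 / muRate2 mu2 c21 c22 (n1 + 1) (n2 + 1))
          * (muRate1 mu1 c11 c12 (n1 + 1) (n2 + 1) / lamRate1 lam1 n1 (n2 + 1))
          * (muRate2 mu2 c21 c22 n1 (n2 + 1) / lamRate2 lam2 n1 n2) = 1)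
      ↔ (c11 = c12 ∧ c21 = c22 ∧ mu1 * c21 = mu2 * c12) := by
  constructor
  · intro h
    have e1 := (circuit_key lam1 lam2 mu1 mu2 c11 c12 c21 c22 hlam1 hlam2 hmu1 hmu2
      hc11 hc22 hc12 hc21 1 1 le_rfl le_rfl).mp (h 1 1 le_rfl le_rfl)
    have e2 := (circuit_key lam1 lam2 mu1 mu2 c11 c12 c21 c22 hlam1 hlam2 hmu1 hmu2
      hc11 hc22 hc12 hc21 2 1 one_le_two le_rfl).mp (h 2 1 one_le_two le_rfl)
    have e3 := (circuit_key lam1 lam2 mu1 mu2 c11 c12 c21 c22 hlam1 hlam2 hmu1 hmu2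
      hc11 hc22 hc12 hc21 1 2 le_rfl one_le_two).mp (h 1 2 le_rfl one_le_two)
    norm_num at e1 e2 e3
    have hcc : c11 = c12 := by
      have h0 : c21 * (c12 - c11) = 0 := by linear_combination e2 - e1
      rcases mul_eq_zero.mp h0 with h' | h'
      · exact absurd h' hc21.ne'
      · linarith
    have hdd : c21 = c22 := by
      have h0 : c12 * (c22 - c21) = 0 := by linear_combination e3 - e1
      rcases mul_eq_zero.mp h0 with h' | h'
      · exact absurd h' hc12.ne'
      · linarith
    refine ⟨hcc, hdd, ?_⟩
    linear_combination (-1 : ℝ) * e1 - 2 * c21 * hcc - 2 * c12 * hdd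
  · rintro ⟨h1, h2, h3⟩ n1 n2 hn1 hn2
    rw [circuit_key lam1 lam2 mu1 mu2 c11 c12 c21 c22 hlam1 hlam2 hmu1 hmu2
      hc11 hc22 hc12 hc21 n1 n2 hn1 hn2]
    linear_combination (-1 : ℝ) * h3 - c12 * ((n2:ℝ) + 1) * h2 - c21 * ((n1:ℝ) + 1) * h1
end
end

section
/- Let X be a complex Banach space, T : X → X a continuous linear map, ν ∈ X with ν ≠ 0, λ₀ ∈ ℂ, and r, C ≥ 0 with r < |λ₀|. Assume T ν = λ₀ ν and that for every n ∈ ℕ there exists a continuous linear functional ℓ_n on X such that the operator norm of T^n − (f ↦ ℓ_n(f)·ν) is at most C·rⁿ. Then: (i) for every z ∈ ℂ with |z| > r, every f ∈ X with f ≠ 0 and T f = z f is a scalar multiple of ν (and consequently z = λ₀); (ii) there exists no f ∈ X with T f − λ₀ f = ν. -/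
private lemma approx_span_aux {X : Type*} [NormedAddCommGroup X] [NormedSpace ℂ X]
    (ν f : X) (K q : ℝ) (hq0 : 0 ≤ q) (hq : q < 1) (c : ℕ → ℂ)
    (h : ∀ n, ‖f - c n • ν‖ ≤ K * q ^ n) : ∃ d : ℂ, f = d • ν := by
  have htend : Filter.Tendsto (fun n => c n • ν) Filter.atTop (nhds f) := by
    rw [tendsto_iff_norm_sub_tendsto_zero]
    have hK : Filter.Tendsto (fun n : ℕ => K * q ^ n) Filter.atTop (nhds 0) := by
      simpa using (tendsto_pow_atTop_nhds_zero_of_lt_one hq0 hq).const_mul K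
    refine squeeze_zero (fun n => norm_nonneg _) (fun n => ?_) hK
    rw [← norm_neg]
    simpa using h n
  have hmem : f ∈ Submodule.span ℂ {ν} := by
    have hclosed : IsClosed (Submodule.span ℂ {ν} : Set X) :=
      (Submodule.span ℂ {ν}).closed_of_finiteDimensional
    exact hclosed.mem_of_tendsto htend (Filter.Eventually.of_forall fun n =>
      Submodule.smul_mem _ _ (Submodule.mem_span_singleton_self ν))
  rcases Submodule.mem_span_singleton.1 hmem with ⟨d, hd⟩
  exact ⟨d, hd.symm⟩

/-- abstract spectral lemma: let `X` be a complex Banach space,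
`T : X → X` continuous linear, `ν ≠ 0`, `l₀ ∈ ℂ`, `r, C ≥ 0` with `r < |l₀|`. Assume
`T ν = l₀ ν` and that for every `n` there is a continuous linear functional `ℓ_n` with
`‖T^n − (f ↦ ℓ_n(f)·ν)‖ ≤ C·rⁿ`. Then (i) for every `z` with `|z| > r`, every nonzero
eigenvector `f` of `T` with eigenvalue `z` is a scalar multiple of `ν` and `z = l₀`;
(ii) there is no `f` with `T f − l₀ f = ν`. -/
theorem rank_one_approximation_spectral_lemma
    (X : Type*) [NormedAddCommGroup X] [NormedSpace ℂ X] [CompleteSpace X]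
    (T : X →L[ℂ] X) (ν : X) (hν : ν ≠ 0) (l₀ : ℂ) (r C : ℝ)
    (hr : 0 ≤ r) (hC : 0 ≤ C) (hrl : r < ‖l₀‖)
    (hTν : T ν = l₀ • ν)
    (happrox : ∀ n : ℕ, ∃ ℓ : X →L[ℂ] ℂ, ‖T ^ n - ℓ.smulRight ν‖ ≤ C * r ^ n) :
    (∀ z : ℂ, r < ‖z‖ → ∀ f : X, f ≠ 0 → T f = z • f →
        (∃ c : ℂ, f = c • ν) ∧ z = l₀)
      ∧ ¬ ∃ f : X, T f - l₀ • f = ν := by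
  choose ℓ hℓ using happrox
  have hl₀ : l₀ ≠ 0 := by
    intro h; rw [h] at hrl; simp at hrl; linarith
  constructor
  · intro z hz f hf hTf
    have hz0 : z ≠ 0 := by
      intro h; rw [h] at hz; simp at hz; linarith
    have hzpos : 0 < ‖z‖ := lt_of_le_of_lt hr hz
    -- T^n f = z^n • f
    have hpow : ∀ n : ℕ, (T ^ n) f = z ^ n • f := by
      intro n
      induction n with
      | zero => simp
      | succ n ih =>
        rw [pow_succ, ContinuousLinearMap.mul_apply, hTf, map_smul, ih, smul_smul,
          pow_succ, mul_comm]
    -- approximation of f by multiples of ν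
    have hspan : ∃ c : ℂ, f = c • ν := by
      refine approx_span_aux ν f (C * ‖f‖) (r / ‖z‖) (div_nonneg hr hzpos.le)
        ((div_lt_one hzpos).2 hz) (fun n => ℓ n f / z ^ n) (fun n => ?_)
      have hzn : (z : ℂ) ^ n ≠ 0 := pow_ne_zero _ hz0
      have h1 : ‖(T ^ n - (ℓ n).smulRight ν) f‖ ≤ C * r ^ n * ‖f‖ :=
        le_trans ((T ^ n - (ℓ n).smulRight ν).le_opNorm f)
          (by gcongr; exact hℓ n)
      have h2 : f - (ℓ n f / z ^ n) • ν = (z ^ n)⁻¹ • ((T ^ n - (ℓ n).smulRight ν) f) := by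
        rw [ContinuousLinearMap.sub_apply, hpow n, ContinuousLinearMap.smulRight_apply]
        match_scalars <;> field_simp
      rw [h2, norm_smul, norm_inv, norm_pow]
      calc (‖z‖ ^ n)⁻¹ * ‖(T ^ n - (ℓ n).smulRight ν) f‖
          ≤ (‖z‖ ^ n)⁻¹ * (C * r ^ n * ‖f‖) := by gcongr
        _ = C * ‖f‖ * (r / ‖z‖) ^ n := by
            rw [div_pow]; field_simp
    refine ⟨hspan, ?_⟩
    obtain ⟨c, rfl⟩ := hspan
    have hc : c ≠ 0 := by rintro rfl; simp at hf
    have hsc : (c * l₀) • ν = (c * z) • ν := by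
      rw [mul_smul, mul_smul, ← hTν, ← map_smul, hTf, smul_comm]
    have hcl : c * l₀ = c * z := by
      by_contra h
      exact hν ((smul_eq_zero.1 (by rw [sub_smul, hsc, sub_self])).resolve_left
        (sub_ne_zero.2 h))
    exact (mul_left_cancel₀ hc hcl).symm
  · rintro ⟨f, hf⟩
    have hTf : T f = l₀ • f + ν := by rw [← hf]; abel
    have hpow : ∀ n : ℕ, (T ^ n) f = l₀ ^ n • f + ((n : ℂ) * l₀ ^ n / l₀) • ν := by
      intro n
      induction n with
      | zero => simp
      | succ n ih =>
        rw [pow_succ', ContinuousLinearMap.mul_apply, ih, map_add, map_smul, map_smul,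
          hTf, hTν]
        rw [smul_add, smul_smul, smul_smul]
        push_cast
        rw [pow_succ]
        match_scalars <;> field_simp <;> ring
    have hl₀pos : 0 < ‖l₀‖ := lt_of_le_of_lt hr hrl
    have hspan : ∃ d : ℂ, f = d • ν := by
      refine approx_span_aux ν f (C * ‖f‖) (r / ‖l₀‖) (div_nonneg hr hl₀pos.le)
        ((div_lt_one hl₀pos).2 hrl)
        (fun n => (ℓ n f - (n : ℂ) * l₀ ^ n / l₀) / l₀ ^ n) (fun n => ?_)
      have hln : (l₀ : ℂ) ^ n ≠ 0 := pow_ne_zero _ hl₀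
      have h1 : ‖(T ^ n - (ℓ n).smulRight ν) f‖ ≤ C * r ^ n * ‖f‖ :=
        le_trans ((T ^ n - (ℓ n).smulRight ν).le_opNorm f)
          (by gcongr; exact hℓ n)
      have h2 : f - ((ℓ n f - (n : ℂ) * l₀ ^ n / l₀) / l₀ ^ n) • ν
          = (l₀ ^ n)⁻¹ • ((T ^ n - (ℓ n).smulRight ν) f) := by
        rw [ContinuousLinearMap.sub_apply, hpow n, ContinuousLinearMap.smulRight_apply]
        match_scalars <;> field_simp <;> ring
      rw [h2, norm_smul, norm_inv, norm_pow]
      calc (‖l₀‖ ^ n)⁻¹ * ‖(T ^ n - (ℓ n).smulRight ν) f‖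
          ≤ (‖l₀‖ ^ n)⁻¹ * (C * r ^ n * ‖f‖) := by gcongr
        _ = C * ‖f‖ * (r / ‖l₀‖) ^ n := by
            rw [div_pow]; field_simp
    obtain ⟨d, rfl⟩ := hspan
    apply hν
    rw [← hf, map_smul, hTν, smul_smul, smul_smul, mul_comm, sub_self]
end

section
/- Let η > 1 and δ > 0 satisfy δ·η < 1, and let (f_n)_{n≥0} and (g_n)_{n≥0} be sequences of nonnegative real numbers with f₀ ≤ 1, g_{n−1} ≤ η·g_n for all n ≥ 1, and f_n ≤ η·g_n + δ·f_{n−1} for all n ≥ 1. Then f_n ≤ δⁿ + (η/(1 − δ·η))·g_n for all n ≥ 0. -/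
/-- recursive sequence inequality: if `η > 1`, `δ > 0`, `δ·η < 1`, and
`(f_n)`, `(g_n)` are nonnegative sequences with `f₀ ≤ 1`, `g_{n−1} ≤ η·g_n` and
`f_n ≤ η·g_n + δ·f_{n−1}` for all `n ≥ 1`, then `f_n ≤ δⁿ + (η/(1 − δ·η))·g_n` for all `n`. -/
theorem recursive_sequence_bound (η δ : ℝ) (hη : 1 < η) (hδ : 0 < δ) (hδη : δ * η < 1)
    (f g : ℕ → ℝ) (hf : ∀ n, 0 ≤ f n) (hg : ∀ n, 0 ≤ g n) (hf0 : f 0 ≤ 1)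
    (hgrec : ∀ n : ℕ, 1 ≤ n → g (n - 1) ≤ η * g n)
    (hfrec : ∀ n : ℕ, 1 ≤ n → f n ≤ η * g n + δ * f (n - 1)) :
    ∀ n : ℕ, f n ≤ δ ^ n + (η / (1 - δ * η)) * g n := by
  have hpos : 0 < 1 - δ * η := by linarith
  have hC : 0 ≤ η / (1 - δ * η) := by positivity
  intro n
  induction n with
  | zero =>
    simpa using le_add_of_le_of_nonneg hf0 (mul_nonneg hC (hg 0))
  | succ n ih =>
    have h1 := hfrec (n + 1) (by omega)
    have h2 := hgrec (n + 1) (by omega)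
    simp only [Nat.add_sub_cancel] at h1 h2
    have key : η + δ * (η / (1 - δ * η)) * η = η / (1 - δ * η) := by
      rw [eq_div_iff hpos.ne']
      have hq : η / (1 - δ * η) * (1 - δ * η) = η := div_mul_cancel₀ _ hpos.ne'
      linear_combination (δ * η) * hq
    calc f (n + 1) ≤ η * g (n + 1) + δ * f n := h1
      _ ≤ η * g (n + 1) + δ * (δ ^ n + (η / (1 - δ * η)) * g n) := by nlinarith
      _ ≤ η * g (n + 1) + δ * (δ ^ n + (η / (1 - δ * η)) * (η * g (n + 1))) := by
          have : g n ≤ η * g (n + 1) := h2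
          nlinarith [mul_nonneg hδ.le (mul_nonneg hC (sub_nonneg.2 this))]
      _ = δ ^ (n + 1) + (η + δ * (η / (1 - δ * η)) * η) * g (n + 1) := by ring
      _ = δ ^ (n + 1) + (η / (1 - δ * η)) * g (n + 1) := by rw [key]
end

section
/- Let p ∈ ℕ and let Λ : ℕ → [0,∞) and M : ℕ → (0,∞) satisfy Λ(q) ≤ M(q)/2 for all q > p, and suppose Σ_{m > p} 1/M(m) < ∞. Then Σ_{m=p+1}^{∞} [ 1/M(m) + Σ_{i=m+1}^{∞} (Λ(m)·Λ(m+1)⋯Λ(i−1)) / (M(m)·M(m+1)⋯M(i)) ] ≤ 2 · Σ_{m=p+1}^{∞} 1/M(m). -/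
open scoped ENNReal

/-- hitting-time series bound: if `Λ(q) ≤ M(q)/2` for all `q > p` and
`Σ_{m>p} 1/M(m) < ∞`, then
`Σ_{m>p} [1/M(m) + Σ_{i>m} (Λ(m)⋯Λ(i−1))/(M(m)⋯M(i))] ≤ 2·Σ_{m>p} 1/M(m)`,
all sums being taken in `[0,∞]` (indices parametrized as `m = p+1+k`, `i = m+1+l`). -/
theorem birth_death_hitting_time_series_bound (p : ℕ) (Λ M : ℕ → ℝ)
    (hΛ : ∀ q, 0 ≤ Λ q) (hM : ∀ q, 0 < M q)
    (hdom : ∀ q, p < q → Λ q ≤ M q / 2)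
    (hsum : (∑' k : ℕ, ENNReal.ofReal (1 / M (p + 1 + k))) < ⊤) :
    (∑' k : ℕ, (ENNReal.ofReal (1 / M (p + 1 + k))
        + ∑' l : ℕ, ENNReal.ofReal
            ((∏ t ∈ Finset.Ico (p + 1 + k) (p + 1 + k + 1 + l), Λ t)
              / (∏ t ∈ Finset.Icc (p + 1 + k) (p + 1 + k + 1 + l), M t))))
      ≤ 2 * ∑' k : ℕ, ENNReal.ofReal (1 / M (p + 1 + k)) := by
  set c : ℕ → ℝ≥0∞ := fun j => ENNReal.ofReal (1 / M (p + 1 + j)) with hc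
  set S : ℝ≥0∞ := ∑' k : ℕ, c k with hSdef
  -- pointwise bound on the inner terms
  have key : ∀ k l : ℕ,
      ENNReal.ofReal ((∏ t ∈ Finset.Ico (p + 1 + k) (p + 1 + k + 1 + l), Λ t)
          / (∏ t ∈ Finset.Icc (p + 1 + k) (p + 1 + k + 1 + l), M t))
        ≤ (2 : ℝ≥0∞)⁻¹ ^ (l + 1) * c (k + 1 + l) := by
    intro k l
    set m := p + 1 + k with hm
    set i := m + 1 + l with hi
    have hprodM_pos : 0 < ∏ t ∈ Finset.Ico m i, M t :=
      Finset.prod_pos fun t _ => hM t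
    have hΛle : (∏ t ∈ Finset.Ico m i, Λ t)
        ≤ (1 / 2 : ℝ) ^ (l + 1) * ∏ t ∈ Finset.Ico m i, M t := by
      calc ∏ t ∈ Finset.Ico m i, Λ t ≤ ∏ t ∈ Finset.Ico m i, (M t / 2) := by
            refine Finset.prod_le_prod (fun t _ => hΛ t) ?_
            intro t ht
            rw [Finset.mem_Ico] at ht
            exact hdom t (by omega)
        _ = (1 / 2 : ℝ) ^ (l + 1) * ∏ t ∈ Finset.Ico m i, M t := by
            rw [Finset.prod_div_distrib, Finset.prod_const]
            have hcard : (Finset.Ico m i).card = l + 1 := by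
              rw [Nat.card_Ico]; omega
            rw [hcard]
            field_simp
            rw [← mul_pow]; norm_num
    have hIcc : ∏ t ∈ Finset.Icc m i, M t
        = (∏ t ∈ Finset.Ico m i, M t) * M i := by
      rw [← Finset.Ico_add_one_right_eq_Icc, Finset.prod_Ico_succ_top (by omega)]
    have hreal : (∏ t ∈ Finset.Ico m i, Λ t) / (∏ t ∈ Finset.Icc m i, M t)
        ≤ (1 / 2 : ℝ) ^ (l + 1) * (1 / M i) := by
      rw [hIcc]
      have hden : (0 : ℝ) < (∏ t ∈ Finset.Ico m i, M t) * M i :=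
        mul_pos hprodM_pos (hM i)
      calc (∏ t ∈ Finset.Ico m i, Λ t) / ((∏ t ∈ Finset.Ico m i, M t) * M i)
          ≤ ((1 / 2 : ℝ) ^ (l + 1) * ∏ t ∈ Finset.Ico m i, M t)
              / ((∏ t ∈ Finset.Ico m i, M t) * M i) :=
            div_le_div_of_nonneg_right hΛle hden.le |>.trans_eq rfl
        _ = (1 / 2 : ℝ) ^ (l + 1) * (1 / M i) := by
            rw [mul_comm ((1 / 2 : ℝ) ^ (l + 1)),
              mul_div_mul_left _ _ hprodM_pos.ne', ← mul_one_div]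
    calc ENNReal.ofReal ((∏ t ∈ Finset.Ico m i, Λ t) / (∏ t ∈ Finset.Icc m i, M t))
        ≤ ENNReal.ofReal ((1 / 2 : ℝ) ^ (l + 1) * (1 / M i)) := ENNReal.ofReal_le_ofReal hreal
      _ = ENNReal.ofReal ((1 / 2 : ℝ) ^ (l + 1)) * ENNReal.ofReal (1 / M i) := by
          rw [ENNReal.ofReal_mul (by positivity)]
      _ = (2 : ℝ≥0∞)⁻¹ ^ (l + 1) * c (k + 1 + l) := by
          have h12 : ENNReal.ofReal (1 / 2 : ℝ) = (2 : ℝ≥0∞)⁻¹ := by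
            rw [one_div, ENNReal.ofReal_inv_of_pos (by norm_num)]
            norm_num
          congr 1
          · rw [ENNReal.ofReal_pow (by norm_num), h12]
          · simp only [hc]
            rw [show p + 1 + (k + 1 + l) = i from by omega]
  -- geometric series
  have hgeom : (∑' l : ℕ, (2 : ℝ≥0∞)⁻¹ ^ (l + 1)) = 1 := by
    calc (∑' l : ℕ, (2 : ℝ≥0∞)⁻¹ ^ (l + 1))
        = ∑' l : ℕ, (2 : ℝ≥0∞)⁻¹ * (2 : ℝ≥0∞)⁻¹ ^ l := by
          simp [pow_succ, mul_comm]
      _ = (2 : ℝ≥0∞)⁻¹ * ∑' l : ℕ, (2 : ℝ≥0∞)⁻¹ ^ l := ENNReal.tsum_mul_left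
      _ = (2 : ℝ≥0∞)⁻¹ * (1 - 2⁻¹)⁻¹ := by rw [ENNReal.tsum_geometric]
      _ = 1 := by
          rw [ENNReal.one_sub_inv_two, inv_inv,
            ENNReal.inv_mul_cancel (by norm_num) (by norm_num)]
  -- bound the double sum
  have hdouble : (∑' k : ℕ, ∑' l : ℕ, ENNReal.ofReal
        ((∏ t ∈ Finset.Ico (p + 1 + k) (p + 1 + k + 1 + l), Λ t)
          / (∏ t ∈ Finset.Icc (p + 1 + k) (p + 1 + k + 1 + l), M t))) ≤ S := by
    calc (∑' k : ℕ, ∑' l : ℕ, ENNReal.ofReal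
          ((∏ t ∈ Finset.Ico (p + 1 + k) (p + 1 + k + 1 + l), Λ t)
            / (∏ t ∈ Finset.Icc (p + 1 + k) (p + 1 + k + 1 + l), M t)))
        ≤ ∑' k : ℕ, ∑' l : ℕ, (2 : ℝ≥0∞)⁻¹ ^ (l + 1) * c (k + 1 + l) :=
          ENNReal.tsum_le_tsum fun k => ENNReal.tsum_le_tsum fun l => key k l
      _ = ∑' l : ℕ, ∑' k : ℕ, (2 : ℝ≥0∞)⁻¹ ^ (l + 1) * c (k + 1 + l) :=
          ENNReal.tsum_comm
      _ = ∑' l : ℕ, (2 : ℝ≥0∞)⁻¹ ^ (l + 1) * ∑' k : ℕ, c (k + 1 + l) := by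
          refine tsum_congr fun l => ?_
          exact ENNReal.tsum_mul_left
      _ ≤ ∑' l : ℕ, (2 : ℝ≥0∞)⁻¹ ^ (l + 1) * S := by
          refine ENNReal.tsum_le_tsum fun l => ?_
          refine mul_le_mul_right ?_ _
          exact ENNReal.tsum_comp_le_tsum_of_injective
            (f := fun k : ℕ => k + 1 + l) (fun a b hab => by dsimp at hab; omega) c
      _ = (∑' l : ℕ, (2 : ℝ≥0∞)⁻¹ ^ (l + 1)) * S := ENNReal.tsum_mul_right
      _ = S := by rw [hgeom, one_mul]
  calc (∑' k : ℕ, (c k + ∑' l : ℕ, ENNReal.ofReal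
          ((∏ t ∈ Finset.Ico (p + 1 + k) (p + 1 + k + 1 + l), Λ t)
            / (∏ t ∈ Finset.Icc (p + 1 + k) (p + 1 + k + 1 + l), M t))))
      = S + ∑' k : ℕ, ∑' l : ℕ, ENNReal.ofReal
          ((∏ t ∈ Finset.Ico (p + 1 + k) (p + 1 + k + 1 + l), Λ t)
            / (∏ t ∈ Finset.Icc (p + 1 + k) (p + 1 + k + 1 + l), M t)) :=
        ENNReal.tsum_add
    _ ≤ S + S := add_le_add_right hdouble S
    _ = 2 * S := (two_mul S).symm
end
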